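/- arXiv:0811.4032 — 8 statements merged into one kernel-verified Lean document; each statement's English description precedes it below -/
import Mathlib

section
/- Let p ≥ 2. Every matrix U ∈ SL(p,ℤ) with all column sums odd can be written as U = K·D, where K belongs to the subgroup of SL(p,ℤ) generated by the matrices R_{ij}² (for all i ≠ j), Q_{ij} (for all i ≠ j), and R_{ik}R_{jk} (for all mutually distinct i, j, k), and D is a diagonal matrix whose diagonal entries are all ±1 (necessarily with an even number of −1 entries, since det D = 1). -/
open Matrix

/-- `Rm p i j h` is the matrix `R_{ij} = I + E_{ij}` (where `E_{ij}` has a single nonzero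
entry `1` at position `(i,j)`), as an element of `SL(p, ℤ)`. -/
def Rm (p : ℕ) (i j : Fin p) (h : i ≠ j) : Matrix.SpecialLinearGroup (Fin p) ℤ :=
  ⟨1 + Matrix.single i j 1, by
    simpa [Matrix.transvection] using Matrix.det_transvection_of_ne i j h (1 : ℤ)⟩

/-- `Qm p i j h` is the matrix `Q_{ij} = R_{ij}⁻¹ R_{ji} R_{ij}⁻¹` in `SL(p, ℤ)`. -/
def Qm (p : ℕ) (i j : Fin p) (h : i ≠ j) : Matrix.SpecialLinearGroup (Fin p) ℤ :=
  (Rm p i j h)⁻¹ * Rm p j i h.symm * (Rm p i j h)⁻¹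

namespace St2

variable {p : ℕ}

/-- the generating set from the theorem statement -/
def Sgen (p : ℕ) : Set (Matrix.SpecialLinearGroup (Fin p) ℤ) :=
  ({A | ∃ (i j : Fin p) (h : i ≠ j), A = Rm p i j h ^ 2 ∨ A = Qm p i j h} ∪
   {A | ∃ (i j k : Fin p) (hik : i ≠ k) (hjk : j ≠ k),
      i ≠ j ∧ A = Rm p i k hik * Rm p j k hjk})

def H (p : ℕ) : Subgroup (Matrix.SpecialLinearGroup (Fin p) ℤ) := Subgroup.closure (Sgen p)

/-- transvection as an element of SL -/
def tSL (i j : Fin p) (h : i ≠ j) (c : ℤ) : Matrix.SpecialLinearGroup (Fin p) ℤ :=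
  ⟨Matrix.transvection i j c, Matrix.det_transvection_of_ne i j h c⟩

lemma tSL_mul (i j : Fin p) (h : i ≠ j) (c d : ℤ) :
    tSL i j h c * tSL i j h d = tSL i j h (c + d) :=
  Subtype.ext (Matrix.transvection_mul_transvection_same i j h c d)

lemma tSL_zero (i j : Fin p) (h : i ≠ j) : tSL i j h 0 = 1 :=
  Subtype.ext (Matrix.transvection_zero i j)

lemma Rm_eq (i j : Fin p) (h : i ≠ j) : Rm p i j h = tSL i j h 1 := rfl

lemma tSL_inv (i j : Fin p) (h : i ≠ j) (c : ℤ) : (tSL i j h c)⁻¹ = tSL i j h (-c) := by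
  apply inv_eq_of_mul_eq_one_right
  rw [tSL_mul, add_neg_cancel, tSL_zero]

lemma tSL_two_mem (i j : Fin p) (h : i ≠ j) : tSL i j h 2 ∈ H p := by
  have : tSL i j h 2 = Rm p i j h ^ 2 := by
    rw [Rm_eq, sq, tSL_mul]; norm_num
  rw [this]
  exact Subgroup.subset_closure (Or.inl ⟨i, j, h, Or.inl rfl⟩)

lemma tSL_even_mem (i j : Fin p) (h : i ≠ j) (t : ℤ) : tSL i j h (2 * t) ∈ H p := by
  induction t using Int.induction_on with
  | zero => rw [mul_zero, tSL_zero]; exact one_mem _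
  | succ n ih =>
      have : tSL i j h (2 * (n + 1)) = tSL i j h (2 * n) * tSL i j h 2 := by
        rw [tSL_mul]; ring_nf
      rw [this]; exact mul_mem ih (tSL_two_mem i j h)
  | pred n ih =>
      have : tSL i j h (2 * (-n - 1)) = tSL i j h (2 * (-n)) * (tSL i j h 2)⁻¹ := by
        rw [tSL_inv, tSL_mul]; ring_nf
      rw [this]; exact mul_mem ih (inv_mem (tSL_two_mem i j h))

lemma Qm_mem (i j : Fin p) (h : i ≠ j) : Qm p i j h ∈ H p :=
  Subgroup.subset_closure (Or.inl ⟨i, j, h, Or.inr rfl⟩)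

lemma Cm_mem (i j k : Fin p) (hij : i ≠ j) (hik : i ≠ k) (hjk : j ≠ k) :
    Rm p i k hik * Rm p j k hjk ∈ H p :=
  Subgroup.subset_closure (Or.inr ⟨i, j, k, hik, hjk, hij, rfl⟩)

/-- Row operation A: add `2t` times row `j` to row `i`. -/
lemma opA (i j : Fin p) (h : i ≠ j) (t : ℤ) (M : Matrix.SpecialLinearGroup (Fin p) ℤ) :
    ∃ K ∈ H p, ∀ r s : Fin p,
      ((K * M : Matrix.SpecialLinearGroup (Fin p) ℤ) : Matrix (Fin p) (Fin p) ℤ) r s =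
        (M : Matrix (Fin p) (Fin p) ℤ) r s +
          (if r = i then 2 * t * (M : Matrix (Fin p) (Fin p) ℤ) j s else 0) := by
  refine ⟨tSL i j h (2 * t), tSL_even_mem i j h t, fun r s => ?_⟩
  rw [Matrix.SpecialLinearGroup.coe_mul]
  show (Matrix.transvection i j (2 * t) * (M : Matrix (Fin p) (Fin p) ℤ)) r s = _
  by_cases hr : r = i
  · subst hr; simp
  · simp [hr]

/-- Row operation Q: row i ← −(row j), row j ← row i. -/
lemma opQ (i j : Fin p) (h : i ≠ j) (M : Matrix.SpecialLinearGroup (Fin p) ℤ) :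
    ∃ K ∈ H p, ∀ r s : Fin p,
      ((K * M : Matrix.SpecialLinearGroup (Fin p) ℤ) : Matrix (Fin p) (Fin p) ℤ) r s =
        if r = i then -((M : Matrix (Fin p) (Fin p) ℤ) j s)
        else if r = j then (M : Matrix (Fin p) (Fin p) ℤ) i s
        else (M : Matrix (Fin p) (Fin p) ℤ) r s := by
  refine ⟨Qm p i j h, Qm_mem i j h, fun r s => ?_⟩
  have hco : ((Qm p i j h * M : Matrix.SpecialLinearGroup (Fin p) ℤ) :
      Matrix (Fin p) (Fin p) ℤ) =
      Matrix.transvection i j (-1) * (Matrix.transvection j i 1 *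
        (Matrix.transvection i j (-1) * (M : Matrix (Fin p) (Fin p) ℤ))) := by
    have h1 : (Rm p i j h)⁻¹ = tSL i j h (-1) := by rw [Rm_eq, tSL_inv]
    rw [show Qm p i j h * M = (Rm p i j h)⁻¹ * (Rm p j i h.symm * ((Rm p i j h)⁻¹ * M)) by
      rw [Qm]; group]
    rw [h1, Matrix.SpecialLinearGroup.coe_mul, Matrix.SpecialLinearGroup.coe_mul,
      Matrix.SpecialLinearGroup.coe_mul]
    rfl
  rw [hco]
  by_cases hr : r = i
  · subst hr
    rw [Matrix.transvection_mul_apply_same,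
      Matrix.transvection_mul_apply_of_ne _ _ _ _ h, Matrix.transvection_mul_apply_same,
      Matrix.transvection_mul_apply_same,
      Matrix.transvection_mul_apply_of_ne _ _ _ _ h.symm]
    simp [h]
  · rw [Matrix.transvection_mul_apply_of_ne _ _ _ _ hr]
    by_cases hrj : r = j
    · subst hrj
      rw [Matrix.transvection_mul_apply_same, Matrix.transvection_mul_apply_same,
        Matrix.transvection_mul_apply_of_ne _ _ _ _ h.symm]
      simp [hr]
    · rw [Matrix.transvection_mul_apply_of_ne _ _ _ _ hrj,
        Matrix.transvection_mul_apply_of_ne _ _ _ _ hr]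
      simp [hr, hrj]

/-- Row operation C: add row k to both row i and row j. -/
lemma opC (i j k : Fin p) (hij : i ≠ j) (hik : i ≠ k) (hjk : j ≠ k)
    (M : Matrix.SpecialLinearGroup (Fin p) ℤ) :
    ∃ K ∈ H p, ∀ r s : Fin p,
      ((K * M : Matrix.SpecialLinearGroup (Fin p) ℤ) : Matrix (Fin p) (Fin p) ℤ) r s =
        (M : Matrix (Fin p) (Fin p) ℤ) r s +
          (if r = i then (M : Matrix (Fin p) (Fin p) ℤ) k s
           else if r = j then (M : Matrix (Fin p) (Fin p) ℤ) k s else 0) := by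
  refine ⟨Rm p i k hik * Rm p j k hjk, Cm_mem i j k hij hik hjk, fun r s => ?_⟩
  have hco : ((Rm p i k hik * Rm p j k hjk * M : Matrix.SpecialLinearGroup (Fin p) ℤ) :
      Matrix (Fin p) (Fin p) ℤ) =
      Matrix.transvection i k 1 * (Matrix.transvection j k 1 *
        (M : Matrix (Fin p) (Fin p) ℤ)) := by
    rw [mul_assoc, Matrix.SpecialLinearGroup.coe_mul, Matrix.SpecialLinearGroup.coe_mul]
    rfl
  rw [hco]
  by_cases hr : r = i
  · subst hr
    rw [Matrix.transvection_mul_apply_same,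
      Matrix.transvection_mul_apply_of_ne _ _ _ _ hij,
      Matrix.transvection_mul_apply_of_ne _ _ _ _ (Ne.symm hjk)]
    simp
  · rw [Matrix.transvection_mul_apply_of_ne _ _ _ _ hr]
    by_cases hrj : r = j
    · subst hrj
      rw [Matrix.transvection_mul_apply_same]
      simp [hr]
    · rw [Matrix.transvection_mul_apply_of_ne _ _ _ _ hrj]
      simp [hr, hrj]

/-- all column sums odd -/
def Ocol (M : Matrix (Fin p) (Fin p) ℤ) : Prop := ∀ j : Fin p, Odd (∑ i : Fin p, M i j)

/-- columns `< k` are zero off the diagonal -/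
def DkZ (k : ℕ) (M : Matrix (Fin p) (Fin p) ℤ) : Prop :=
  ∀ i j : Fin p, (j : ℕ) < k → i ≠ j → M i j = 0

/-- columns `< k` have diagonal entry `±1` -/
def DkD (k : ℕ) (M : Matrix (Fin p) (Fin p) ℤ) : Prop :=
  ∀ j : Fin p, (j : ℕ) < k → M j j = 1 ∨ M j j = -1

lemma sum_if_pair (i j : Fin p) (h : i ≠ j) (a b : ℤ) :
    (∑ r : Fin p, if r = i then a else if r = j then b else 0) = a + b := by
  have : ∀ r : Fin p, (if r = i then a else if r = j then b else 0) =
      (if r = i then a else 0) + (if r = j then b else 0) := by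
    intro r
    by_cases hr : r = i
    · subst hr; simp [h]
    · simp [hr]
  rw [Finset.sum_congr rfl (fun r _ => this r), Finset.sum_add_distrib]
  simp

lemma sum_if_single (i : Fin p) (a : ℤ) :
    (∑ r : Fin p, if r = i then a else 0) = a := by simp

/-- generic parity-of-column-sums preservation: two rows get modified, with even total change -/
lemma ocol_pres_two {M M' : Matrix (Fin p) (Fin p) ℤ} {i j : Fin p} (h : i ≠ j)
    (x y : Fin p → ℤ)
    (hform : ∀ r s, M' r s = M r s + (if r = i then x s else if r = j then y s else 0))
    (heven : ∀ s, Even (x s + y s)) (hO : Ocol M) : Ocol M' := by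
  intro c
  have : (∑ r : Fin p, M' r c) = (∑ r : Fin p, M r c) + (x c + y c) := by
    rw [Finset.sum_congr rfl (fun r _ => hform r c), Finset.sum_add_distrib,
      sum_if_pair i j h]
  rw [this]
  exact (hO c).add_even (heven c)

lemma ocol_pres_one {M M' : Matrix (Fin p) (Fin p) ℤ} {i : Fin p} (x : Fin p → ℤ)
    (hform : ∀ r s, M' r s = M r s + (if r = i then x s else 0))
    (heven : ∀ s, Even (x s)) (hO : Ocol M) : Ocol M' := by
  intro c
  have : (∑ r : Fin p, M' r c) = (∑ r : Fin p, M r c) + x c := by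
    rw [Finset.sum_congr rfl (fun r _ => hform r c), Finset.sum_add_distrib,
      sum_if_single i]
  rw [this]
  exact (hO c).add_even (heven c)

/-- if all entries in columns `< k` are unchanged, the invariants DkZ/DkD are preserved -/
lemma dk_pres {M M' : Matrix (Fin p) (Fin p) ℤ} {k : ℕ}
    (hsame : ∀ (r c : Fin p), (c : ℕ) < k → M' r c = M r c)
    (hZ : DkZ k M) (hD : DkD k M) : DkZ k M' ∧ DkD k M' := by
  constructor
  · intro i j hj hij; rw [hsame i j hj]; exact hZ i j hj hij
  · intro j hj; rw [hsame j j hj]; exact hD j hj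

/-- key divisibility: if columns `< k` of `M` are diagonal and `d` divides all entries of
column `κ` in rows `≥ k`, then `d` divides `det M`. -/
lemma dvd_det (M : Matrix (Fin p) (Fin p) ℤ) (k : ℕ) (κ : Fin p) (hκ : (κ : ℕ) = k)
    (hz : DkZ k M) (d : ℤ) (hd : ∀ i : Fin p, k ≤ (i : ℕ) → d ∣ M i κ) : d ∣ M.det := by
  rw [Matrix.det_apply]
  refine Finset.dvd_sum fun σ _ => ?_
  have hprod : d ∣ ∏ i : Fin p, M (σ i) i := by
    by_cases hσ : k ≤ ((σ κ : Fin p) : ℕ)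
    · exact dvd_trans (hd _ hσ) (Finset.dvd_prod_of_mem _ (Finset.mem_univ κ))
    · push_neg at hσ
      have : ∃ c : Fin p, (c : ℕ) < k ∧ σ c ≠ c := by
        by_contra hall
        push_neg at hall
        have h1 : σ (σ κ) = σ κ := hall _ hσ
        have h2 : σ κ = κ := σ.injective h1
        rw [h2, hκ] at hσ
        exact lt_irrefl _ hσ
      obtain ⟨c, hck, hc⟩ := this
      have : M (σ c) c = 0 := hz (σ c) c hck hc
      rw [Finset.prod_eq_zero (f := fun i => M (σ i) i) (Finset.mem_univ c) this]
      exact dvd_zero d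
  rw [Units.smul_def]
  exact hprod.mul_left _

/-- even-step euclidean reduction -/
lemma euclid_pos (a b : ℤ) (ha : 0 < a) : ∃ t : ℤ, (b + 2 * t * a).natAbs ≤ a.natAbs := by
  set m : ℤ := 2 * a with hm
  have hm0 : 0 < m := by omega
  set q : ℤ := b / m with hq
  set r : ℤ := b % m with hr
  have hdiv : m * q + r = b := Int.mul_ediv_add_emod b m
  have hr0 : 0 ≤ r := Int.emod_nonneg b (by omega)
  have hrm : r < m := Int.emod_lt_of_pos b hm0
  by_cases hra : r ≤ a
  · refine ⟨-q, ?_⟩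
    have : b + 2 * (-q) * a = r := by rw [hm] at hdiv; linear_combination -hdiv
    rw [this]; omega
  · refine ⟨-q - 1, ?_⟩
    have : b + 2 * (-q - 1) * a = r - m := by rw [hm] at hdiv; rw [hm]; linear_combination -hdiv
    rw [this]; omega

lemma euclid (a b : ℤ) (ha : a ≠ 0) : ∃ t : ℤ, (b + 2 * t * a).natAbs ≤ a.natAbs := by
  rcases lt_or_gt_of_ne ha with hneg | hpos
  · obtain ⟨t, ht⟩ := euclid_pos (-a) b (by omega)
    refine ⟨-t, ?_⟩
    have : b + 2 * (-t) * a = b + 2 * t * (-a) := by ring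
    rw [this]
    simpa using ht
  · exact euclid_pos a b hpos

lemma phase1 (k : ℕ) (κ : Fin p) (hκ : (κ : ℕ) = k) :
    ∀ n : ℕ, ∀ M : Matrix.SpecialLinearGroup (Fin p) ℤ,
      Ocol (M : Matrix (Fin p) (Fin p) ℤ) → DkZ k (M : Matrix (Fin p) (Fin p) ℤ) → DkD k (M : Matrix (Fin p) (Fin p) ℤ) →
      (∑ i : Fin p, if k ≤ (i : ℕ) then ((M : Matrix (Fin p) (Fin p) ℤ) i κ).natAbs else 0) ≤ n →
      ∃ K ∈ H p, Ocol ((K * M : Matrix.SpecialLinearGroup (Fin p) ℤ) :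
          Matrix (Fin p) (Fin p) ℤ) ∧
        DkZ k ((K * M : Matrix.SpecialLinearGroup (Fin p) ℤ) : Matrix (Fin p) (Fin p) ℤ) ∧
        DkD k ((K * M : Matrix.SpecialLinearGroup (Fin p) ℤ) : Matrix (Fin p) (Fin p) ℤ) ∧
        (((K * M : Matrix.SpecialLinearGroup (Fin p) ℤ) : Matrix (Fin p) (Fin p) ℤ) κ κ = 1 ∨
         ((K * M : Matrix.SpecialLinearGroup (Fin p) ℤ) : Matrix (Fin p) (Fin p) ℤ) κ κ = -1) := by
  intro n
  induction n using Nat.strong_induction_on with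
  | _ n IH =>
  intro M hO hZ hD hsum
  by_cases hall0 : ∀ i : Fin p, k ≤ (i : ℕ) → (M : Matrix (Fin p) (Fin p) ℤ) i κ = 0
  · exfalso
    have h0 : (0 : ℤ) ∣ ((M : Matrix (Fin p) (Fin p) ℤ)).det :=
      dvd_det _ k κ hκ hZ 0 (fun i hi => by rw [hall0 i hi])
    rw [M.prop] at h0
    exact one_ne_zero (zero_dvd_iff.mp h0)
  · push_neg at hall0
    obtain ⟨i0, hi0k, hi00⟩ := hall0
    set S := Finset.univ.filter
      (fun i : Fin p => k ≤ (i : ℕ) ∧ (M : Matrix (Fin p) (Fin p) ℤ) i κ ≠ 0) with hSdef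
    have hS : S.Nonempty := ⟨i0, by simp [hSdef, hi0k, hi00]⟩
    obtain ⟨a, haS, hamin⟩ :=
      Finset.exists_min_image S (fun i => ((M : Matrix (Fin p) (Fin p) ℤ) i κ).natAbs) hS
    have hak : k ≤ (a : ℕ) := ((Finset.mem_filter.mp haS).2).1
    have ha0 : (M : Matrix (Fin p) (Fin p) ℤ) a κ ≠ 0 := ((Finset.mem_filter.mp haS).2).2
    by_cases hunit : (M : Matrix (Fin p) (Fin p) ℤ) a κ = 1 ∨
        (M : Matrix (Fin p) (Fin p) ℤ) a κ = -1
    · by_cases haκ : a = κ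
      · refine ⟨1, one_mem _, ?_⟩
        rw [one_mul]
        exact ⟨hO, hZ, hD, haκ ▸ hunit⟩
      · have hκa : κ ≠ a := fun hc => haκ hc.symm
        obtain ⟨K, hK, hKf⟩ := opQ κ a hκa M
        have hform : ∀ r s, ((K * M : Matrix.SpecialLinearGroup (Fin p) ℤ) :
            Matrix (Fin p) (Fin p) ℤ) r s =
            (M : Matrix (Fin p) (Fin p) ℤ) r s +
            (if r = κ then
                -((M : Matrix (Fin p) (Fin p) ℤ) a s) - (M : Matrix (Fin p) (Fin p) ℤ) κ s
             else if r = a then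
                (M : Matrix (Fin p) (Fin p) ℤ) κ s - (M : Matrix (Fin p) (Fin p) ℤ) a s
             else 0) := by
          intro r s
          rw [hKf r s]
          by_cases hr : r = κ
          · subst hr; simp
          · by_cases hr' : r = a
            · subst hr'; simp [hr]
            · simp [hr, hr']
        have hO' : Ocol ((K * M : Matrix.SpecialLinearGroup (Fin p) ℤ) :
            Matrix (Fin p) (Fin p) ℤ) := by
          refine ocol_pres_two hκa _ _ hform (fun s => ?_) hO
          refine ⟨-((M : Matrix (Fin p) (Fin p) ℤ) a s), by ring⟩
        have hsame : ∀ (r c : Fin p), (c : ℕ) < k →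
            ((K * M : Matrix.SpecialLinearGroup (Fin p) ℤ) :
              Matrix (Fin p) (Fin p) ℤ) r c = (M : Matrix (Fin p) (Fin p) ℤ) r c := by
          intro r c hc
          have hac : a ≠ c := fun h => by rw [h] at hak; omega
          have hκc : κ ≠ c := fun h => by rw [h] at hκ; omega
          rw [hform r c, hZ a c hc hac, hZ κ c hc hκc]
          simp
        obtain ⟨hZ', hD'⟩ := dk_pres hsame hZ hD
        refine ⟨K, hK, hO', hZ', hD', ?_⟩
        rcases hunit with h1 | h1
        · right; rw [hKf κ κ]; simp [h1]
        · left; rw [hKf κ κ]; simp [h1]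
    · by_cases hdvd : ∀ i : Fin p, k ≤ (i : ℕ) →
          (M : Matrix (Fin p) (Fin p) ℤ) a κ ∣ (M : Matrix (Fin p) (Fin p) ℤ) i κ
      · exfalso
        have h1 : (M : Matrix (Fin p) (Fin p) ℤ) a κ ∣ ((M : Matrix (Fin p) (Fin p) ℤ)).det :=
          dvd_det _ k κ hκ hZ _ hdvd
        rw [M.prop] at h1
        rcases Int.isUnit_iff.mp (isUnit_of_dvd_one h1) with h2 | h2
        · exact hunit (Or.inl h2)
        · exact hunit (Or.inr h2)
      · push_neg at hdvd
        obtain ⟨j, hjk, hjnd⟩ := hdvd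
        have hb0 : (M : Matrix (Fin p) (Fin p) ℤ) j κ ≠ 0 := by
          intro h; exact hjnd (h ▸ dvd_zero _)
        have hja : j ≠ a := by
          intro h; exact hjnd (h ▸ dvd_refl _)
        have hjS : j ∈ S := Finset.mem_filter.mpr ⟨Finset.mem_univ j, hjk, hb0⟩
        have hmin : ((M : Matrix (Fin p) (Fin p) ℤ) a κ).natAbs ≤
            ((M : Matrix (Fin p) (Fin p) ℤ) j κ).natAbs := hamin j hjS
        have hne : ((M : Matrix (Fin p) (Fin p) ℤ) a κ).natAbs ≠
            ((M : Matrix (Fin p) (Fin p) ℤ) j κ).natAbs := by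
          intro h
          rcases Int.natAbs_eq_natAbs_iff.mp h with h1 | h1
          · exact hjnd (h1 ▸ dvd_refl _)
          · refine hjnd ⟨-1, ?_⟩
            rw [h1]; ring
        have hlt : ((M : Matrix (Fin p) (Fin p) ℤ) a κ).natAbs <
            ((M : Matrix (Fin p) (Fin p) ℤ) j κ).natAbs := lt_of_le_of_ne hmin hne
        obtain ⟨t, ht⟩ := euclid _ ((M : Matrix (Fin p) (Fin p) ℤ) j κ) ha0
        obtain ⟨K, hK, hKf⟩ := opA j a hja t M
        have hO' : Ocol ((K * M : Matrix.SpecialLinearGroup (Fin p) ℤ) :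
            Matrix (Fin p) (Fin p) ℤ) := by
          refine ocol_pres_one _ hKf (fun s => ⟨t * (M : Matrix (Fin p) (Fin p) ℤ) a s,
            by ring⟩) hO
        have hsame : ∀ (r c : Fin p), (c : ℕ) < k →
            ((K * M : Matrix.SpecialLinearGroup (Fin p) ℤ) :
              Matrix (Fin p) (Fin p) ℤ) r c = (M : Matrix (Fin p) (Fin p) ℤ) r c := by
          intro r c hc
          have hac : a ≠ c := fun h => by rw [h] at hak; omega
          rw [hKf r c, hZ a c hc hac]
          simp
        obtain ⟨hZ', hD'⟩ := dk_pres hsame hZ hD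
        -- measure decrease
        have hfne : ∀ i : Fin p, i ≠ j →
            ((K * M : Matrix.SpecialLinearGroup (Fin p) ℤ) :
              Matrix (Fin p) (Fin p) ℤ) i κ = (M : Matrix (Fin p) (Fin p) ℤ) i κ := by
          intro i hi
          rw [hKf i κ]
          simp [hi]
        have hfj : ((K * M : Matrix.SpecialLinearGroup (Fin p) ℤ) :
            Matrix (Fin p) (Fin p) ℤ) j κ =
            (M : Matrix (Fin p) (Fin p) ℤ) j κ + 2 * t * (M : Matrix (Fin p) (Fin p) ℤ) a κ := by
          rw [hKf j κ]; simp
        have hmeas : (∑ i : Fin p, if k ≤ (i : ℕ) then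
            (((K * M : Matrix.SpecialLinearGroup (Fin p) ℤ) :
              Matrix (Fin p) (Fin p) ℤ) i κ).natAbs else 0) <
            (∑ i : Fin p, if k ≤ (i : ℕ) then
              ((M : Matrix (Fin p) (Fin p) ℤ) i κ).natAbs else 0) := by
          rw [← Finset.sum_erase_add Finset.univ _ (Finset.mem_univ j),
            ← Finset.sum_erase_add Finset.univ
              (fun i : Fin p => if k ≤ (i : ℕ) then
                ((M : Matrix (Fin p) (Fin p) ℤ) i κ).natAbs else 0) (Finset.mem_univ j)]
          have he : ∑ i ∈ Finset.univ.erase j, (if k ≤ (i : ℕ) then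
              (((K * M : Matrix.SpecialLinearGroup (Fin p) ℤ) :
                Matrix (Fin p) (Fin p) ℤ) i κ).natAbs else 0) =
              ∑ i ∈ Finset.univ.erase j, (if k ≤ (i : ℕ) then
                ((M : Matrix (Fin p) (Fin p) ℤ) i κ).natAbs else 0) := by
            refine Finset.sum_congr rfl (fun i hi => ?_)
            rw [hfne i (Finset.mem_erase.mp hi).1]
          rw [he]
          have hj2 : (if k ≤ (j : ℕ) then
              (((K * M : Matrix.SpecialLinearGroup (Fin p) ℤ) :
                Matrix (Fin p) (Fin p) ℤ) j κ).natAbs else 0) <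
              (if k ≤ (j : ℕ) then ((M : Matrix (Fin p) (Fin p) ℤ) j κ).natAbs else 0) := by
            rw [if_pos hjk, if_pos hjk, hfj]
            exact lt_of_le_of_lt ht hlt
          omega
        have hrec := IH _ (lt_of_lt_of_le hmeas hsum) (K * M) hO' hZ' hD' (le_refl _)
        obtain ⟨K2, hK2, hrO, hrZ, hrD, hrpiv⟩ := hrec
        refine ⟨K2 * K, mul_mem hK2 hK, ?_⟩
        rw [mul_assoc]
        exact ⟨hrO, hrZ, hrD, hrpiv⟩

lemma phase2a (k : ℕ) (κ : Fin p) (hκ : (κ : ℕ) = k) :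
    ∀ n : ℕ, ∀ M : Matrix.SpecialLinearGroup (Fin p) ℤ,
      Ocol (M : Matrix (Fin p) (Fin p) ℤ) → DkZ k (M : Matrix (Fin p) (Fin p) ℤ) →
      DkD k (M : Matrix (Fin p) (Fin p) ℤ) →
      ((M : Matrix (Fin p) (Fin p) ℤ) κ κ = 1 ∨ (M : Matrix (Fin p) (Fin p) ℤ) κ κ = -1) →
      (Finset.univ.filter (fun i : Fin p => i ≠ κ ∧
        Odd ((M : Matrix (Fin p) (Fin p) ℤ) i κ))).card ≤ n →
      ∃ K ∈ H p,
        Ocol ((K * M : Matrix.SpecialLinearGroup (Fin p) ℤ) : Matrix (Fin p) (Fin p) ℤ) ∧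
        DkZ k ((K * M : Matrix.SpecialLinearGroup (Fin p) ℤ) : Matrix (Fin p) (Fin p) ℤ) ∧
        DkD k ((K * M : Matrix.SpecialLinearGroup (Fin p) ℤ) : Matrix (Fin p) (Fin p) ℤ) ∧
        (((K * M : Matrix.SpecialLinearGroup (Fin p) ℤ) : Matrix (Fin p) (Fin p) ℤ) κ κ = 1 ∨
         ((K * M : Matrix.SpecialLinearGroup (Fin p) ℤ) : Matrix (Fin p) (Fin p) ℤ) κ κ = -1) ∧
        (∀ i : Fin p, i ≠ κ →
          Even (((K * M : Matrix.SpecialLinearGroup (Fin p) ℤ) :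
            Matrix (Fin p) (Fin p) ℤ) i κ)) := by
  intro n
  induction n using Nat.strong_induction_on with
  | _ n IH =>
  intro M hO hZ hD hpiv hcard
  set T := Finset.univ.filter (fun i : Fin p => i ≠ κ ∧
    Odd ((M : Matrix (Fin p) (Fin p) ℤ) i κ)) with hTdef
  by_cases hT : T.Nonempty
  · obtain ⟨i, hiT⟩ := hT
    obtain ⟨-, hiκ, hiodd⟩ := Finset.mem_filter.mp hiT
    -- find a second odd row j
    have hpodd : Odd ((M : Matrix (Fin p) (Fin p) ℤ) κ κ) := by
      rcases hpiv with h1 | h1 <;> rw [h1] <;> decide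
    have h1 : (∑ r ∈ Finset.univ.erase κ, (M : Matrix (Fin p) (Fin p) ℤ) r κ) +
        (M : Matrix (Fin p) (Fin p) ℤ) κ κ = ∑ r : Fin p, (M : Matrix (Fin p) (Fin p) ℤ) r κ :=
      Finset.sum_erase_add _ _ (Finset.mem_univ κ)
    have himem : i ∈ Finset.univ.erase κ := Finset.mem_erase.mpr ⟨hiκ, Finset.mem_univ i⟩
    have h2 : (∑ r ∈ (Finset.univ.erase κ).erase i, (M : Matrix (Fin p) (Fin p) ℤ) r κ) +
        (M : Matrix (Fin p) (Fin p) ℤ) i κ =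
        ∑ r ∈ Finset.univ.erase κ, (M : Matrix (Fin p) (Fin p) ℤ) r κ :=
      Finset.sum_erase_add _ _ himem
    have htot := hO κ
    have hrest : Odd (∑ r ∈ (Finset.univ.erase κ).erase i,
        (M : Matrix (Fin p) (Fin p) ℤ) r κ) := by
      rw [Int.odd_iff] at htot hpodd hiodd ⊢
      omega
    have hex : ∃ j ∈ (Finset.univ.erase κ).erase i,
        Odd ((M : Matrix (Fin p) (Fin p) ℤ) j κ) := by
      by_contra hc
      push_neg at hc
      have hz0 : (∑ r ∈ (Finset.univ.erase κ).erase i,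
          (M : Matrix (Fin p) (Fin p) ℤ) r κ) % 2 = 0 := by
        rw [Finset.sum_int_mod]
        have : ∀ r ∈ (Finset.univ.erase κ).erase i,
            (M : Matrix (Fin p) (Fin p) ℤ) r κ % 2 = 0 := by
          intro r hr
          have := hc r hr
          rw [Int.not_odd_iff_even, Int.even_iff] at this
          exact this
        rw [Finset.sum_congr rfl this]
        simp
      rw [Int.odd_iff] at hrest
      omega
    obtain ⟨j, hjmem, hjodd⟩ := hex
    have hji : j ≠ i := (Finset.mem_erase.mp hjmem).1
    have hjκ : j ≠ κ := (Finset.mem_erase.mp (Finset.mem_erase.mp hjmem).2).1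
    obtain ⟨K, hK, hKf⟩ := opC i j κ (Ne.symm hji) hiκ hjκ M
    have hO' : Ocol ((K * M : Matrix.SpecialLinearGroup (Fin p) ℤ) :
        Matrix (Fin p) (Fin p) ℤ) := by
      refine ocol_pres_two (Ne.symm hji) _ _ hKf (fun s => ?_) hO
      exact ⟨(M : Matrix (Fin p) (Fin p) ℤ) κ s, by ring⟩
    have hsame : ∀ (r c : Fin p), (c : ℕ) < k →
        ((K * M : Matrix.SpecialLinearGroup (Fin p) ℤ) :
          Matrix (Fin p) (Fin p) ℤ) r c = (M : Matrix (Fin p) (Fin p) ℤ) r c := by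
      intro r c hc
      have hκc : κ ≠ c := fun h => by rw [h] at hκ; omega
      rw [hKf r c, hZ κ c hc hκc]
      simp
    obtain ⟨hZ', hD'⟩ := dk_pres hsame hZ hD
    have hpiv' : ((K * M : Matrix.SpecialLinearGroup (Fin p) ℤ) :
        Matrix (Fin p) (Fin p) ℤ) κ κ = (M : Matrix (Fin p) (Fin p) ℤ) κ κ := by
      rw [hKf κ κ]
      simp [Ne.symm hiκ, Ne.symm hjκ]
    -- entries i and j became even, others unchanged
    have hievn : Even (((K * M : Matrix.SpecialLinearGroup (Fin p) ℤ) :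
        Matrix (Fin p) (Fin p) ℤ) i κ) := by
      rw [hKf i κ]
      simp only [if_pos rfl]
      exact hiodd.add_odd hpodd
    have hjevn : Even (((K * M : Matrix.SpecialLinearGroup (Fin p) ℤ) :
        Matrix (Fin p) (Fin p) ℤ) j κ) := by
      rw [hKf j κ]
      rw [if_neg hji, if_pos rfl]
      exact hjodd.add_odd hpodd
    have hothers : ∀ r : Fin p, r ≠ i → r ≠ j →
        ((K * M : Matrix.SpecialLinearGroup (Fin p) ℤ) :
          Matrix (Fin p) (Fin p) ℤ) r κ = (M : Matrix (Fin p) (Fin p) ℤ) r κ := by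
      intro r hri hrj
      rw [hKf r κ, if_neg hri, if_neg hrj, add_zero]
    -- card decrease
    have hsub : Finset.univ.filter (fun r : Fin p => r ≠ κ ∧
        Odd (((K * M : Matrix.SpecialLinearGroup (Fin p) ℤ) :
          Matrix (Fin p) (Fin p) ℤ) r κ)) ⊆ T.erase i := by
      intro r hr
      obtain ⟨-, hrκ, hrodd⟩ := Finset.mem_filter.mp hr
      have hri : r ≠ i := by
        intro h; subst h
        rw [Int.even_iff] at hievn; rw [Int.odd_iff] at hrodd; omega
      have hrj : r ≠ j := by
        intro h; subst h
        rw [Int.even_iff] at hjevn; rw [Int.odd_iff] at hrodd; omega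
      refine Finset.mem_erase.mpr ⟨hri, ?_⟩
      rw [hTdef]
      refine Finset.mem_filter.mpr ⟨Finset.mem_univ r, hrκ, ?_⟩
      rw [← hothers r hri hrj]
      exact hrodd
    have hcard' : (Finset.univ.filter (fun r : Fin p => r ≠ κ ∧
        Odd (((K * M : Matrix.SpecialLinearGroup (Fin p) ℤ) :
          Matrix (Fin p) (Fin p) ℤ) r κ))).card < n := by
      calc (Finset.univ.filter _).card ≤ (T.erase i).card := Finset.card_le_card hsub
        _ < T.card := Finset.card_erase_lt_of_mem hiT
        _ ≤ n := hcard
    obtain ⟨K2, hK2, hrO, hrZ, hrD, hrpiv, hrev⟩ :=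
      IH _ hcard' (K * M) hO' hZ' hD' (by rw [hpiv']; exact hpiv) (le_refl _)
    refine ⟨K2 * K, mul_mem hK2 hK, ?_⟩
    rw [mul_assoc]
    exact ⟨hrO, hrZ, hrD, hrpiv, hrev⟩
  · rw [Finset.not_nonempty_iff_eq_empty] at hT
    refine ⟨1, one_mem _, ?_⟩
    rw [one_mul]
    refine ⟨hO, hZ, hD, hpiv, fun i hiκ => ?_⟩
    rw [← Int.not_odd_iff_even]
    intro hodd
    have : i ∈ T := Finset.mem_filter.mpr ⟨Finset.mem_univ i, hiκ, hodd⟩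
    rw [hT] at this
    exact absurd this (Finset.notMem_empty i)

lemma phase2b (k : ℕ) (κ : Fin p) (hκ : (κ : ℕ) = k) :
    ∀ n : ℕ, ∀ M : Matrix.SpecialLinearGroup (Fin p) ℤ,
      Ocol (M : Matrix (Fin p) (Fin p) ℤ) → DkZ k (M : Matrix (Fin p) (Fin p) ℤ) →
      DkD k (M : Matrix (Fin p) (Fin p) ℤ) →
      ((M : Matrix (Fin p) (Fin p) ℤ) κ κ = 1 ∨ (M : Matrix (Fin p) (Fin p) ℤ) κ κ = -1) →
      (∀ i : Fin p, i ≠ κ → Even ((M : Matrix (Fin p) (Fin p) ℤ) i κ)) →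
      (Finset.univ.filter (fun i : Fin p => i ≠ κ ∧
        (M : Matrix (Fin p) (Fin p) ℤ) i κ ≠ 0)).card ≤ n →
      ∃ K ∈ H p,
        Ocol ((K * M : Matrix.SpecialLinearGroup (Fin p) ℤ) : Matrix (Fin p) (Fin p) ℤ) ∧
        DkZ k ((K * M : Matrix.SpecialLinearGroup (Fin p) ℤ) : Matrix (Fin p) (Fin p) ℤ) ∧
        DkD k ((K * M : Matrix.SpecialLinearGroup (Fin p) ℤ) : Matrix (Fin p) (Fin p) ℤ) ∧
        (((K * M : Matrix.SpecialLinearGroup (Fin p) ℤ) : Matrix (Fin p) (Fin p) ℤ) κ κ = 1 ∨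
         ((K * M : Matrix.SpecialLinearGroup (Fin p) ℤ) : Matrix (Fin p) (Fin p) ℤ) κ κ = -1) ∧
        (∀ i : Fin p, i ≠ κ →
          ((K * M : Matrix.SpecialLinearGroup (Fin p) ℤ) :
            Matrix (Fin p) (Fin p) ℤ) i κ = 0) := by
  intro n
  induction n using Nat.strong_induction_on with
  | _ n IH =>
  intro M hO hZ hD hpiv hev hcard
  set T := Finset.univ.filter (fun i : Fin p => i ≠ κ ∧
    (M : Matrix (Fin p) (Fin p) ℤ) i κ ≠ 0) with hTdef
  by_cases hT : T.Nonempty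
  · obtain ⟨i, hiT⟩ := hT
    obtain ⟨-, hiκ, hi0⟩ := Finset.mem_filter.mp hiT
    obtain ⟨c, hc⟩ := hev i hiκ
    set t : ℤ := -c * (M : Matrix (Fin p) (Fin p) ℤ) κ κ with htdef
    obtain ⟨K, hK, hKf⟩ := opA i κ hiκ t M
    have hzero : ((K * M : Matrix.SpecialLinearGroup (Fin p) ℤ) :
        Matrix (Fin p) (Fin p) ℤ) i κ = 0 := by
      rw [hKf i κ, if_pos rfl, htdef]
      rcases hpiv with h1 | h1 <;> rw [h1] <;> ring_nf <;> omega
    have hO' : Ocol ((K * M : Matrix.SpecialLinearGroup (Fin p) ℤ) :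
        Matrix (Fin p) (Fin p) ℤ) := by
      refine ocol_pres_one _ hKf (fun s => ⟨t * (M : Matrix (Fin p) (Fin p) ℤ) κ s,
        by ring⟩) hO
    have hsame : ∀ (r c' : Fin p), (c' : ℕ) < k →
        ((K * M : Matrix.SpecialLinearGroup (Fin p) ℤ) :
          Matrix (Fin p) (Fin p) ℤ) r c' = (M : Matrix (Fin p) (Fin p) ℤ) r c' := by
      intro r c' hc'
      have hκc : κ ≠ c' := fun h => by rw [h] at hκ; omega
      rw [hKf r c', hZ κ c' hc' hκc]
      simp
    obtain ⟨hZ', hD'⟩ := dk_pres hsame hZ hD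
    have hothers : ∀ r : Fin p, r ≠ i →
        ((K * M : Matrix.SpecialLinearGroup (Fin p) ℤ) :
          Matrix (Fin p) (Fin p) ℤ) r κ = (M : Matrix (Fin p) (Fin p) ℤ) r κ := by
      intro r hri
      rw [hKf r κ, if_neg hri, add_zero]
    have hpiv' : ((K * M : Matrix.SpecialLinearGroup (Fin p) ℤ) :
        Matrix (Fin p) (Fin p) ℤ) κ κ = (M : Matrix (Fin p) (Fin p) ℤ) κ κ :=
      hothers κ (Ne.symm hiκ)
    have hev' : ∀ r : Fin p, r ≠ κ →
        Even (((K * M : Matrix.SpecialLinearGroup (Fin p) ℤ) :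
          Matrix (Fin p) (Fin p) ℤ) r κ) := by
      intro r hrκ
      by_cases hri : r = i
      · subst hri; rw [hzero]; exact Even.zero
      · rw [hothers r hri]; exact hev r hrκ
    have hsub : Finset.univ.filter (fun r : Fin p => r ≠ κ ∧
        ((K * M : Matrix.SpecialLinearGroup (Fin p) ℤ) :
          Matrix (Fin p) (Fin p) ℤ) r κ ≠ 0) ⊆ T.erase i := by
      intro r hr
      obtain ⟨-, hrκ, hr0⟩ := Finset.mem_filter.mp hr
      have hri : r ≠ i := by
        intro h; subst h; exact hr0 hzero
      refine Finset.mem_erase.mpr ⟨hri, ?_⟩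
      rw [hTdef]
      refine Finset.mem_filter.mpr ⟨Finset.mem_univ r, hrκ, ?_⟩
      rw [← hothers r hri]
      exact hr0
    have hcard' : (Finset.univ.filter (fun r : Fin p => r ≠ κ ∧
        ((K * M : Matrix.SpecialLinearGroup (Fin p) ℤ) :
          Matrix (Fin p) (Fin p) ℤ) r κ ≠ 0)).card < n := by
      calc (Finset.univ.filter _).card ≤ (T.erase i).card := Finset.card_le_card hsub
        _ < T.card := Finset.card_erase_lt_of_mem hiT
        _ ≤ n := hcard
    obtain ⟨K2, hK2, hrO, hrZ, hrD, hrpiv, hrz⟩ :=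
      IH _ hcard' (K * M) hO' hZ' hD' (by rw [hpiv']; exact hpiv) hev' (le_refl _)
    refine ⟨K2 * K, mul_mem hK2 hK, ?_⟩
    rw [mul_assoc]
    exact ⟨hrO, hrZ, hrD, hrpiv, hrz⟩
  · rw [Finset.not_nonempty_iff_eq_empty] at hT
    refine ⟨1, one_mem _, ?_⟩
    rw [one_mul]
    refine ⟨hO, hZ, hD, hpiv, fun i hiκ => ?_⟩
    by_contra h0
    have : i ∈ T := Finset.mem_filter.mpr ⟨Finset.mem_univ i, hiκ, h0⟩
    rw [hT] at this
    exact absurd this (Finset.notMem_empty i)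

lemma column_step (k : ℕ) (hkp : k < p) (M : Matrix.SpecialLinearGroup (Fin p) ℤ)
    (hO : Ocol (M : Matrix (Fin p) (Fin p) ℤ)) (hZ : DkZ k (M : Matrix (Fin p) (Fin p) ℤ))
    (hD : DkD k (M : Matrix (Fin p) (Fin p) ℤ)) :
    ∃ K ∈ H p,
      Ocol ((K * M : Matrix.SpecialLinearGroup (Fin p) ℤ) : Matrix (Fin p) (Fin p) ℤ) ∧
      DkZ (k + 1) ((K * M : Matrix.SpecialLinearGroup (Fin p) ℤ) : Matrix (Fin p) (Fin p) ℤ) ∧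
      DkD (k + 1) ((K * M : Matrix.SpecialLinearGroup (Fin p) ℤ) :
        Matrix (Fin p) (Fin p) ℤ) := by
  set κ : Fin p := ⟨k, hkp⟩ with hκdef
  have hκ : (κ : ℕ) = k := rfl
  obtain ⟨K1, hK1, h1O, h1Z, h1D, h1piv⟩ := phase1 k κ hκ _ M hO hZ hD (le_refl _)
  obtain ⟨K2, hK2, h2O, h2Z, h2D, h2piv, h2ev⟩ :=
    phase2a k κ hκ _ (K1 * M) h1O h1Z h1D h1piv (le_refl _)
  obtain ⟨K3, hK3, h3O, h3Z, h3D, h3piv, h3z⟩ :=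
    phase2b k κ hκ _ (K2 * (K1 * M)) h2O h2Z h2D h2piv h2ev (le_refl _)
  refine ⟨K3 * K2 * K1, mul_mem (mul_mem hK3 hK2) hK1, ?_⟩
  rw [mul_assoc, mul_assoc]
  refine ⟨h3O, ?_, ?_⟩
  · intro i j hj hij
    rcases Nat.lt_or_ge (j : ℕ) k with hjk | hjk
    · exact h3Z i j hjk hij
    · have hjκ : j = κ := by
        apply Fin.ext
        rw [hκ]
        omega
      subst hjκ
      exact h3z i hij
  · intro j hj
    rcases Nat.lt_or_ge (j : ℕ) k with hjk | hjk
    · exact h3D j hjk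
    · have hjκ : j = κ := by
        apply Fin.ext
        rw [hκ]
        omega
      subst hjκ
      exact h3piv

lemma main_loop : ∀ d k : ℕ, k + d = p → ∀ M : Matrix.SpecialLinearGroup (Fin p) ℤ,
    Ocol (M : Matrix (Fin p) (Fin p) ℤ) → DkZ k (M : Matrix (Fin p) (Fin p) ℤ) →
    DkD k (M : Matrix (Fin p) (Fin p) ℤ) →
    ∃ K ∈ H p,
      DkZ p ((K * M : Matrix.SpecialLinearGroup (Fin p) ℤ) : Matrix (Fin p) (Fin p) ℤ) ∧
      DkD p ((K * M : Matrix.SpecialLinearGroup (Fin p) ℤ) : Matrix (Fin p) (Fin p) ℤ) := by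
  intro d
  induction d with
  | zero =>
      intro k hk M hO hZ hD
      refine ⟨1, one_mem _, ?_⟩
      rw [one_mul]
      have : k = p := by omega
      subst this
      exact ⟨hZ, hD⟩
  | succ d IH =>
      intro k hk M hO hZ hD
      have hkp : k < p := by omega
      obtain ⟨K1, hK1, h1O, h1Z, h1D⟩ := column_step k hkp M hO hZ hD
      obtain ⟨K2, hK2, h2Z, h2D⟩ := IH (k + 1) (by omega) (K1 * M) h1O h1Z h1D
      refine ⟨K2 * K1, mul_mem hK2 hK1, ?_⟩
      rw [mul_assoc]
      exact ⟨h2Z, h2D⟩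

end St2

/-- Every `U ∈ SL(p,ℤ)` with all column sums odd can be written as `U = K * D`, where `K`
lies in the subgroup generated by the `R_{ij}²` (`i ≠ j`), the `Q_{ij}` (`i ≠ j`), and the
`R_{ik} R_{jk}` (`i, j, k` mutually distinct), and `D` is diagonal with all diagonal
entries `±1`. -/
theorem statement2 (p : ℕ) (hp : 2 ≤ p) (U : Matrix.SpecialLinearGroup (Fin p) ℤ)
    (hU : ∀ j : Fin p, Odd (∑ i : Fin p, (U : Matrix (Fin p) (Fin p) ℤ) i j)) :
    ∃ K D : Matrix.SpecialLinearGroup (Fin p) ℤ,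
      K ∈ Subgroup.closure
        ({A | ∃ (i j : Fin p) (h : i ≠ j), A = Rm p i j h ^ 2 ∨ A = Qm p i j h} ∪
         {A | ∃ (i j k : Fin p) (hik : i ≠ k) (hjk : j ≠ k),
            i ≠ j ∧ A = Rm p i k hik * Rm p j k hjk}) ∧
      (∀ i j : Fin p, i ≠ j → (D : Matrix (Fin p) (Fin p) ℤ) i j = 0) ∧
      (∀ i : Fin p, (D : Matrix (Fin p) (Fin p) ℤ) i i = 1 ∨
        (D : Matrix (Fin p) (Fin p) ℤ) i i = -1) ∧
      U = K * D := by
  have h0Z : St2.DkZ 0 (U : Matrix (Fin p) (Fin p) ℤ) :=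
    fun i j hj _ => absurd hj (Nat.not_lt_zero _)
  have h0D : St2.DkD 0 (U : Matrix (Fin p) (Fin p) ℤ) :=
    fun j hj => absurd hj (Nat.not_lt_zero _)
  obtain ⟨K, hK, hZ, hD⟩ := St2.main_loop p 0 (by omega) U hU h0Z h0D
  refine ⟨K⁻¹, K * U, inv_mem hK, ?_, ?_, (inv_mul_cancel_left K U).symm⟩
  · intro i j hij
    exact hZ i j j.isLt hij
  · intro i
    exact hD i i.isLt
end

section
/- Let p ≥ 2 and let G be the subgroup of SL(p,ℤ) generated by R_{1i}², Q_{1i} (1 < i ≤ p) and R_{1p}R_{ip} (1 < i < p). Then G contains R_{ij}² and Q_{ij} for all pairs of distinct indices i ≠ j in {1, …, p}, and G contains R_{ik}R_{jk} for all mutually distinct triples of indices i, j, k in {1, …, p}. -/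
open Matrix

/-- The first index `1` (of the paper's indexing `1, …, p`) in `Fin p`. -/
def firstIdx (p : ℕ) (hp : 2 ≤ p) : Fin p := ⟨0, by omega⟩

/-- The last index `p` (of the paper's indexing `1, …, p`) in `Fin p`. -/
def lastIdx (p : ℕ) (hp : 2 ≤ p) : Fin p := ⟨p - 1, by omega⟩

theorem firstIdx_ne_lastIdx (p : ℕ) (hp : 2 ≤ p) : firstIdx p hp ≠ lastIdx p hp := by
  simp only [firstIdx, lastIdx, Fin.ne_iff_vne]
  omega

/-- The generating set consisting of `R_{1i}²`, `Q_{1i}` for `1 < i ≤ p`, together with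
`R_{1p} R_{ip}` for `1 < i < p`. -/
def GGens (p : ℕ) (hp : 2 ≤ p) : Set (Matrix.SpecialLinearGroup (Fin p) ℤ) :=
  {A | ∃ (i : Fin p) (h : firstIdx p hp ≠ i),
      A = Rm p (firstIdx p hp) i h ^ 2 ∨ A = Qm p (firstIdx p hp) i h} ∪
  {A | ∃ (i : Fin p) (h1 : firstIdx p hp ≠ i) (h2 : i ≠ lastIdx p hp),
      A = Rm p (firstIdx p hp) (lastIdx p hp) (firstIdx_ne_lastIdx p hp) *
          Rm p i (lastIdx p hp) h2}

/-- The subgroup `G ≤ SL(p,ℤ)` generated by `R_{1i}²`, `Q_{1i}` (`1 < i ≤ p`) and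
`R_{1p} R_{ip}` (`1 < i < p`). -/
def G (p : ℕ) (hp : 2 ≤ p) : Subgroup (Matrix.SpecialLinearGroup (Fin p) ℤ) :=
  Subgroup.closure (GGens p hp)



namespace St4Aux

variable {p : ℕ}

/-- Single-entry matrix with a `1` at `(i,j)`. -/
abbrev Em (i j : Fin p) : Matrix (Fin p) (Fin p) ℤ := Matrix.single i j (1 : ℤ)

theorem Em_mul_same (i j k : Fin p) : Em i j * Em j k = Em (p := p) i k := by
  simpa using Matrix.single_mul_single_same i j k (1 : ℤ) (c := 1)

theorem Em_mul_ne {j k : Fin p} (i l : Fin p) (h : j ≠ k) : Em i j * Em k l = 0 :=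
  Matrix.single_mul_single_of_ne (c := (1 : ℤ)) i j k h 1

theorem transvection_eq (i j : Fin p) (c : ℤ) :
    Matrix.transvection i j c = 1 + c • Em i j := by
  simp [Matrix.transvection, Em, Matrix.smul_single]

/-- `Tz i j c` : the transvection `1 + c E_{ij}` in `SL(p,ℤ)` (junk value `1` if `i = j`). -/
def Tz (i j : Fin p) (c : ℤ) : Matrix.SpecialLinearGroup (Fin p) ℤ :=
  if h : i = j then 1 else ⟨Matrix.transvection i j c, Matrix.det_transvection_of_ne i j h c⟩

theorem coe_Tz {i j : Fin p} (h : i ≠ j) (c : ℤ) :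
    (Tz i j c : Matrix (Fin p) (Fin p) ℤ) = 1 + c • Em i j := by
  simp [Tz, h, transvection_eq]

theorem Tz_mul {i j : Fin p} (h : i ≠ j) (c d : ℤ) :
    Tz i j c * Tz i j d = Tz i j (c + d) := by
  apply Subtype.ext
  simp only [Matrix.SpecialLinearGroup.coe_mul, coe_Tz h]
  simp only [mul_add, add_mul, one_mul, mul_one, smul_mul_assoc, mul_smul_comm,
    Em_mul_ne i j h.symm, smul_zero, add_zero]
  module

theorem Tz_zero (i j : Fin p) : Tz i j 0 = 1 := by
  by_cases h : i = j
  · simp [Tz, h]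
  · exact Subtype.ext (by simp [coe_Tz h])

theorem Tz_inv (i j : Fin p) (c : ℤ) : (Tz i j c)⁻¹ = Tz i j (-c) := by
  by_cases h : i = j
  · simp [Tz, h]
  · refine inv_eq_of_mul_eq_one_right ?_
    rw [Tz_mul h, add_neg_cancel, Tz_zero]

/-- `Qs i j` : the matrix `Q_{ij}` expressed via `Tz`. -/
def Qs (i j : Fin p) : Matrix.SpecialLinearGroup (Fin p) ℤ :=
  Tz i j (-1) * Tz j i 1 * Tz i j (-1)

/-- The matrix of `Q_{ij}`. -/
def Qmat (i j : Fin p) : Matrix (Fin p) (Fin p) ℤ :=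
  1 - Em i i - Em j j + Em j i - Em i j

theorem coe_Qs {i j : Fin p} (h : i ≠ j) :
    (Qs i j : Matrix (Fin p) (Fin p) ℤ) = Qmat i j := by
  simp only [Qs, Qmat, Matrix.SpecialLinearGroup.coe_mul, coe_Tz h, coe_Tz h.symm]
  simp only [mul_add, add_mul, one_mul, mul_one, smul_mul_assoc, mul_smul_comm, smul_smul,
    Em_mul_same, Em_mul_ne _ _ h, Em_mul_ne _ _ h.symm, smul_zero, add_zero, mul_zero, zero_mul]
  module

theorem Qmat_mul_Qmat {i j : Fin p} (h : i ≠ j) : Qmat i j * Qmat j i = 1 := by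
  simp only [Qmat]
  simp only [mul_add, add_mul, mul_sub, sub_mul, one_mul, mul_one,
    Em_mul_same, Em_mul_ne _ _ h, Em_mul_ne _ _ h.symm, smul_zero, add_zero, mul_zero, zero_mul]
  module

theorem Qs_inv {i j : Fin p} (h : i ≠ j) : (Qs i j)⁻¹ = Qs j i := by
  refine inv_eq_of_mul_eq_one_right (Subtype.ext ?_)
  simp [coe_Qs h, coe_Qs h.symm, Qmat_mul_Qmat h]

theorem conj_eq {Q X Y : Matrix.SpecialLinearGroup (Fin p) ℤ}
    (h : (Q : Matrix (Fin p) (Fin p) ℤ) * X = (Y : Matrix (Fin p) (Fin p) ℤ) * Q) :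
    Q * X * Q⁻¹ = Y := by
  have h2 : Q * X = Y * Q := Subtype.ext (by simpa using h)
  rw [h2, mul_inv_cancel_right]

theorem C1 {a b k l : Fin p} (hab : a ≠ b) (hkl : k ≠ l) (hka : k ≠ a) (hkb : k ≠ b)
    (hla : l ≠ a) (hlb : l ≠ b) (c : ℤ) :
    Qs a b * Tz k l c * (Qs a b)⁻¹ = Tz k l c := by
  refine conj_eq ?_
  simp only [coe_Qs hab, coe_Tz hkl, Qmat]
  simp only [mul_add, add_mul, mul_sub, sub_mul, one_mul, mul_one, smul_mul_assoc,
    mul_smul_comm, smul_smul, Em_mul_same, Em_mul_ne _ _ hka, Em_mul_ne _ _ hkb, Em_mul_ne _ _ hka.symm,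
    Em_mul_ne _ _ hkb.symm, Em_mul_ne _ _ hla, Em_mul_ne _ _ hlb,
    Em_mul_ne _ _ hla.symm, Em_mul_ne _ _ hlb.symm, smul_zero, add_zero, mul_zero, zero_mul]
  module

theorem C2 {a b l : Fin p} (hab : a ≠ b) (hla : l ≠ a) (hlb : l ≠ b) (c : ℤ) :
    Qs a b * Tz a l c * (Qs a b)⁻¹ = Tz b l c := by
  refine conj_eq ?_
  simp only [coe_Qs hab, coe_Tz hla.symm, coe_Tz hlb.symm, Qmat]
  simp only [mul_add, add_mul, mul_sub, sub_mul, one_mul, mul_one, smul_mul_assoc,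
    mul_smul_comm, smul_smul, Em_mul_same, Em_mul_ne _ _ hab, Em_mul_ne _ _ hab.symm,
    Em_mul_ne _ _ hla.symm, Em_mul_ne _ _ hlb.symm, Em_mul_ne _ _ hla, Em_mul_ne _ _ hlb,
    smul_zero, add_zero, mul_zero, zero_mul]
  module

theorem C4 {a b k : Fin p} (hab : a ≠ b) (hka : k ≠ a) (hkb : k ≠ b) (c : ℤ) :
    Qs a b * Tz k a c * (Qs a b)⁻¹ = Tz k b c := by
  refine conj_eq ?_
  simp only [coe_Qs hab, coe_Tz hka, coe_Tz hkb, Qmat]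
  simp only [mul_add, add_mul, mul_sub, sub_mul, one_mul, mul_one, smul_mul_assoc,
    mul_smul_comm, smul_smul, Em_mul_same, Em_mul_ne _ _ hab, Em_mul_ne _ _ hab.symm,
    Em_mul_ne _ _ hka, Em_mul_ne _ _ hkb, Em_mul_ne _ _ hka.symm, Em_mul_ne _ _ hkb.symm,
    smul_zero, add_zero, mul_zero, zero_mul]
  module

theorem C5 {a b k : Fin p} (hab : a ≠ b) (hka : k ≠ a) (hkb : k ≠ b) (c : ℤ) :
    Qs a b * Tz k b c * (Qs a b)⁻¹ = Tz k a (-c) := by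
  refine conj_eq ?_
  simp only [coe_Qs hab, coe_Tz hka, coe_Tz hkb, Qmat]
  simp only [mul_add, add_mul, mul_sub, sub_mul, one_mul, mul_one, smul_mul_assoc,
    mul_smul_comm, smul_smul, Em_mul_same, Em_mul_ne _ _ hab, Em_mul_ne _ _ hab.symm,
    Em_mul_ne _ _ hka, Em_mul_ne _ _ hkb, Em_mul_ne _ _ hka.symm, Em_mul_ne _ _ hkb.symm,
    smul_zero, add_zero, mul_zero, zero_mul]
  module

theorem C6 {a b : Fin p} (hab : a ≠ b) (c : ℤ) :
    Qs a b * Tz a b c * (Qs a b)⁻¹ = Tz b a (-c) := by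
  refine conj_eq ?_
  simp only [coe_Qs hab, coe_Tz hab, coe_Tz hab.symm, Qmat]
  simp only [mul_add, add_mul, mul_sub, sub_mul, one_mul, mul_one, smul_mul_assoc,
    mul_smul_comm, smul_smul, Em_mul_same, Em_mul_ne _ _ hab, Em_mul_ne _ _ hab.symm,
    smul_zero, add_zero, mul_zero, zero_mul]
  module

theorem CQQ {a b l : Fin p} (hab : a ≠ b) (hla : l ≠ a) (hlb : l ≠ b) :
    Qs a b * Qs a l * (Qs a b)⁻¹ = Qs b l := by
  have e : Qs a b * Qs a l * (Qs a b)⁻¹ =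
      (Qs a b * Tz a l (-1) * (Qs a b)⁻¹) * (Qs a b * Tz l a 1 * (Qs a b)⁻¹) *
      (Qs a b * Tz a l (-1) * (Qs a b)⁻¹) := by
    simp only [Qs]; group
  rw [e, C2 hab hla hlb, C4 hab hla hlb, Qs]

theorem Tz_comm {x y k : Fin p} (hxk : x ≠ k) (hyk : y ≠ k) (c d : ℤ) :
    Tz x k c * Tz y k d = Tz y k d * Tz x k c := by
  apply Subtype.ext
  simp only [Matrix.SpecialLinearGroup.coe_mul, coe_Tz hxk, coe_Tz hyk]
  simp only [mul_add, add_mul, one_mul, mul_one, smul_mul_assoc, mul_smul_comm,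
    Em_mul_ne _ _ hxk.symm, Em_mul_ne _ _ hyk.symm, smul_zero, add_zero]
  module

theorem conj_mem {H : Subgroup (Matrix.SpecialLinearGroup (Fin p) ℤ)}
    {Q X Y : Matrix.SpecialLinearGroup (Fin p) ℤ}
    (hQ : Q ∈ H) (hX : X ∈ H) (h : Q * X * Q⁻¹ = Y) : Y ∈ H :=
  h ▸ mul_mem (mul_mem hQ hX) (inv_mem hQ)

theorem conj2 {Q X Y X' Y' : Matrix.SpecialLinearGroup (Fin p) ℤ}
    (hX : Q * X * Q⁻¹ = X') (hY : Q * Y * Q⁻¹ = Y') : Q * (X * Y) * Q⁻¹ = X' * Y' := by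
  rw [← hX, ← hY]; group

end St4Aux

namespace St4Aux

theorem Rm_eq {p : ℕ} {i j : Fin p} (h : i ≠ j) : Rm p i j h = Tz i j 1 :=
  Subtype.ext (by simp [Rm, coe_Tz h])

theorem Qm_eq {p : ℕ} {i j : Fin p} (h : i ≠ j) : Qm p i j h = Qs i j := by
  rw [Qm, Rm_eq h, Rm_eq h.symm, Tz_inv, Qs]

variable {p : ℕ} (hp : 2 ≤ p)

theorem memT2_first (i : Fin p) (h : firstIdx p hp ≠ i) :
    Tz (firstIdx p hp) i 2 ∈ G p hp := by
  have : Rm p (firstIdx p hp) i h ^ 2 ∈ G p hp :=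
    Subgroup.subset_closure (Or.inl ⟨i, h, Or.inl rfl⟩)
  rwa [Rm_eq h, sq, Tz_mul h] at this

theorem memQ_first (i : Fin p) (h : firstIdx p hp ≠ i) :
    Qs (firstIdx p hp) i ∈ G p hp := by
  have : Qm p (firstIdx p hp) i h ∈ G p hp :=
    Subgroup.subset_closure (Or.inl ⟨i, h, Or.inr rfl⟩)
  rwa [Qm_eq h] at this

theorem memPair_gen (i : Fin p) (h1 : firstIdx p hp ≠ i) (h2 : i ≠ lastIdx p hp) :
    Tz (firstIdx p hp) (lastIdx p hp) 1 * Tz i (lastIdx p hp) 1 ∈ G p hp := by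
  have : Rm p (firstIdx p hp) (lastIdx p hp) (firstIdx_ne_lastIdx p hp) *
      Rm p i (lastIdx p hp) h2 ∈ G p hp :=
    Subgroup.subset_closure (Or.inr ⟨i, h1, h2, rfl⟩)
  rwa [Rm_eq (firstIdx_ne_lastIdx p hp), Rm_eq h2] at this

theorem memQ (i j : Fin p) (h : i ≠ j) : Qs i j ∈ G p hp := by
  by_cases hio : i = firstIdx p hp
  · subst hio; exact memQ_first hp j h
  · by_cases hjo : j = firstIdx p hp
    · subst hjo
      rw [← Qs_inv (Ne.symm hio)]
      exact inv_mem (memQ_first hp i (Ne.symm hio))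
    · exact conj_mem (memQ_first hp i (Ne.symm hio)) (memQ_first hp j (Ne.symm hjo))
        (CQQ (Ne.symm hio) hjo (Ne.symm h))

theorem memT2 (i j : Fin p) (h : i ≠ j) : Tz i j 2 ∈ G p hp := by
  by_cases hio : i = firstIdx p hp
  · subst hio; exact memT2_first hp j h
  · by_cases hjo : j = firstIdx p hp
    · subst hjo
      have hX : Tz (firstIdx p hp) i (-2) ∈ G p hp := by
        rw [← Tz_inv]; exact inv_mem (memT2_first hp i (Ne.symm hio))
      have hc := C6 (a := firstIdx p hp) (b := i) (Ne.symm hio) (-2)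
      rw [neg_neg] at hc
      exact conj_mem (memQ hp _ i (Ne.symm hio)) hX hc
    · exact conj_mem (memQ hp _ i (Ne.symm hio)) (memT2_first hp j (Ne.symm hjo))
        (C2 (Ne.symm hio) hjo h.symm 2)

theorem memPair_q (x y : Fin p) (hx : x ≠ lastIdx p hp) (hy : y ≠ lastIdx p hp)
    (hxy : x ≠ y) : Tz x (lastIdx p hp) 1 * Tz y (lastIdx p hp) 1 ∈ G p hp := by
  have hoq : firstIdx p hp ≠ lastIdx p hp := firstIdx_ne_lastIdx p hp
  by_cases hxo : x = firstIdx p hp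
  · subst hxo; exact memPair_gen hp y hxy hy
  · by_cases hyo : y = firstIdx p hp
    · subst hyo
      rw [Tz_comm hx hy]
      exact memPair_gen hp x (Ne.symm hxo) hx
    · refine conj_mem (memQ hp _ x (Ne.symm hxo)) (memPair_gen hp y (Ne.symm hyo) hy)
        (conj2 (C2 (Ne.symm hxo) hoq.symm (Ne.symm hx) 1)
          (C1 (Ne.symm hxo) hy hyo (Ne.symm hxy) hoq.symm (Ne.symm hx) 1))

theorem memT3q (j k : Fin p) (hjk : j ≠ k) (hjq : j ≠ lastIdx p hp)
    (hkq : k ≠ lastIdx p hp) :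
    Tz (lastIdx p hp) k 1 * Tz j k 1 ∈ G p hp := by
  have h1 : Tz j (lastIdx p hp) 1 * Tz k (lastIdx p hp) 1 ∈ G p hp :=
    memPair_q hp j k hjq hkq hjk
  have h2 : Tz j k (-1) * Tz (lastIdx p hp) k (-1) ∈ G p hp :=
    conj_mem (memQ hp k _ hkq) h1 (conj2 (C5 hkq hjk hjq 1) (C6 hkq 1))
  have h3 := inv_mem h2
  rwa [_root_.mul_inv_rev, Tz_inv, Tz_inv, neg_neg] at h3

theorem memT3 (i j k : Fin p) (hik : i ≠ k) (hjk : j ≠ k) (hij : i ≠ j) :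
    Tz i k 1 * Tz j k 1 ∈ G p hp := by
  by_cases hkq : k = lastIdx p hp
  · subst hkq; exact memPair_q hp i j hik hjk hij
  · by_cases hiq : i = lastIdx p hp
    · subst hiq
      exact memT3q hp j k hjk (Ne.symm hij) hkq
    · by_cases hjq : j = lastIdx p hp
      · subst hjq
        rw [Tz_comm hik hjk]
        exact memT3q hp i k hik hiq hkq
      · refine conj_mem (memQ hp _ k (Ne.symm hkq)) (memPair_q hp i j hiq hjq hij)
          (conj2 (C4 (Ne.symm hkq) hiq hik 1) (C4 (Ne.symm hkq) hjq hjk 1))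

end St4Aux

/-- `G` contains `R_{ij}²` and `Q_{ij}` for all distinct `i ≠ j`, and `R_{ik} R_{jk}`
for all mutually distinct triples `i, j, k`. -/
theorem statement4 (p : ℕ) (hp : 2 ≤ p) :
    (∀ (i j : Fin p) (h : i ≠ j), (Rm p i j h) ^ 2 ∈ G p hp ∧ Qm p i j h ∈ G p hp) ∧
    (∀ (i j k : Fin p) (hik : i ≠ k) (hjk : j ≠ k), i ≠ j →
      Rm p i k hik * Rm p j k hjk ∈ G p hp) := by
  constructor
  · intro i j h
    refine ⟨?_, ?_⟩
    · rw [St4Aux.Rm_eq h, sq, St4Aux.Tz_mul h]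
      exact St4Aux.memT2 hp i j h
    · rw [St4Aux.Qm_eq h]
      exact St4Aux.memQ hp i j h
  · intro i j k hik hjk hij
    rw [St4Aux.Rm_eq hik, St4Aux.Rm_eq hjk]
    exact St4Aux.memT3 hp i j k hik hjk hij
end

section
/- Let p ≥ 2. For any index i with 1 ≤ i ≤ p and any U ∈ SL(p,ℤ), U can be written as U = K·J, where K belongs to the subgroup of SL(p,ℤ) generated by the matrices R_{1j}² and Q_{1j} for 1 < j ≤ p, and J ∈ SL(p,ℤ) satisfies that the (i,i) entry of J^{-1} equals 1 (equivalently, since det J = 1, the (i,i) cofactor J*_{ii} of J equals 1). -/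
open Matrix

variable {p : ℕ}

def myR (i j : Fin p) (h : i ≠ j) (s : ℤ) : Matrix.SpecialLinearGroup (Fin p) ℤ :=
  ⟨1 + Matrix.single i j s, by
    simpa [Matrix.transvection] using Matrix.det_transvection_of_ne i j h s⟩

lemma myR_mul (i j : Fin p) (h : i ≠ j) (s t : ℤ) :
    myR i j h s * myR i j h t = myR i j h (s + t) := by
  apply Subtype.ext
  show (1 + Matrix.single i j s) * (1 + Matrix.single i j t)
      = 1 + Matrix.single i j (s + t)
  have h0 : Matrix.single i j s * Matrix.single i j t = 0 :=
    Matrix.single_mul_single_of_ne s i j i h.symm t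
  rw [add_mul, mul_add, mul_add, one_mul, mul_one, h0, Matrix.single_add]
  noncomm_ring

lemma myR_zero (i j : Fin p) (h : i ≠ j) : myR i j h 0 = 1 := by
  apply Subtype.ext
  show 1 + Matrix.single i j (0:ℤ) = 1
  simp

lemma myR_inv (i j : Fin p) (h : i ≠ j) (s : ℤ) : (myR i j h s)⁻¹ = myR i j h (-s) := by
  apply inv_eq_of_mul_eq_one_right
  rw [myR_mul]
  simp [myR_zero]

lemma myR_zpow (i j : Fin p) (h : i ≠ j) (s : ℤ) (n : ℤ) :
    (myR i j h s) ^ n = myR i j h (s * n) := by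
  induction n using Int.induction_on with
  | zero => simpa using (myR_zero i j h).symm ▸ (by simp [myR_zero])
  | succ k ih =>
      rw [_root_.zpow_add_one, ih, myR_mul]
      congr 1; ring
  | pred k ih =>
      rw [_root_.zpow_sub_one, ih, myR_inv, myR_mul]
      congr 1; ring

lemma myR_mulVec (i j : Fin p) (h : i ≠ j) (s : ℤ) (x : Fin p → ℤ) :
    (myR i j h s : Matrix (Fin p) (Fin p) ℤ) *ᵥ x
      = fun k => if k = i then x i + s * x j else x k := by
  funext k
  show ((1 + Matrix.single i j s) *ᵥ x) k = _
  rw [Matrix.add_mulVec, Matrix.one_mulVec]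
  have : (Matrix.single i j s *ᵥ x) k = if k = i then s * x j else 0 := by
    simp [Matrix.mulVec, dotProduct, Matrix.single, ite_and, eq_comm]
  rw [Pi.add_apply, this]
  split <;> simp_all

lemma int_red_pos (a b : ℤ) (hb : 0 < b) : ∃ s : ℤ, (a + 2*s*b).natAbs ≤ b.natAbs := by
  have h2b : (0:ℤ) < 2*b := by omega
  have hm := Int.emod_nonneg a (by omega : (2*b) ≠ 0)
  have hm2 := Int.emod_lt_of_pos a h2b
  have hd := Int.mul_ediv_add_emod a (2*b)
  by_cases hle : a % (2*b) ≤ b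
  · refine ⟨-(a / (2*b)), ?_⟩
    have e : a + 2*(-(a / (2*b)))*b = a % (2*b) := by linear_combination -hd
    rw [e]; omega
  · refine ⟨-(a / (2*b)) - 1, ?_⟩
    have e : a + 2*(-(a / (2*b)) - 1)*b = a % (2*b) - 2*b := by linear_combination -hd
    rw [e]; omega

lemma int_red (a b : ℤ) (hb : b ≠ 0) : ∃ s : ℤ, (a + 2*s*b).natAbs ≤ b.natAbs := by
  rcases hb.lt_or_gt with hneg | hpos
  · obtain ⟨s, hs⟩ := int_red_pos a (-b) (by omega)
    refine ⟨-s, ?_⟩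
    have e : a + 2*(-s)*b = a + 2*s*(-b) := by ring
    rw [e]
    simpa using hs
  · exact int_red_pos a b hpos


lemma Rm_eq {p : ℕ} (i j : Fin p) (h : i ≠ j) : Rm p i j h = myR i j h 1 := rfl

lemma Qm_eq {p : ℕ} (i j : Fin p) (h : i ≠ j) :
    Qm p i j h = myR i j h (-1) * (myR j i h.symm 1 * myR i j h (-1)) := by
  rw [Qm, Rm_eq, Rm_eq, myR_inv, mul_assoc]

lemma Qm_mulVec {p : ℕ} (i j : Fin p) (h : i ≠ j) (x : Fin p → ℤ) :
    (Qm p i j h : Matrix (Fin p) (Fin p) ℤ) *ᵥ x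
      = fun k => if k = i then -x j else if k = j then x i else x k := by
  rw [Qm_eq, Matrix.SpecialLinearGroup.coe_mul, Matrix.SpecialLinearGroup.coe_mul,
    ← Matrix.mulVec_mulVec, ← Matrix.mulVec_mulVec, myR_mulVec, myR_mulVec, myR_mulVec]
  funext k
  by_cases h1 : k = i
  · subst h1
    simp [h, h.symm]
  · by_cases h2 : k = j
    · subst h2
      simp [h, h.symm, h1]
    · simp [h1, h2]

lemma Qm_inv_eq {p : ℕ} (i j : Fin p) (h : i ≠ j) :
    (Qm p i j h)⁻¹ = myR i j h 1 * (myR j i h.symm (-1) * myR i j h 1) := by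
  rw [Qm_eq, _root_.mul_inv_rev, _root_.mul_inv_rev, myR_inv, myR_inv, neg_neg, mul_assoc]

lemma Qm_inv_mulVec {p : ℕ} (i j : Fin p) (h : i ≠ j) (x : Fin p → ℤ) :
    ((Qm p i j h)⁻¹ : Matrix.SpecialLinearGroup (Fin p) ℤ).val *ᵥ x
      = fun k => if k = i then x j else if k = j then -x i else x k := by
  rw [Qm_inv_eq, Matrix.SpecialLinearGroup.coe_mul, Matrix.SpecialLinearGroup.coe_mul,
    ← Matrix.mulVec_mulVec, ← Matrix.mulVec_mulVec, myR_mulVec, myR_mulVec, myR_mulVec]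
  funext k
  by_cases h1 : k = i
  · subst h1
    simp [h, h.symm]
  · by_cases h2 : k = j
    · subst h2
      simp [h, h.symm, h1]
    · simp [h1, h2]

section

variable (p : ℕ) (hp : 2 ≤ p)

def genSet : Set (Matrix.SpecialLinearGroup (Fin p) ℤ) :=
  {A | ∃ (j : Fin p) (h : firstIdx p hp ≠ j),
    A = Rm p (firstIdx p hp) j h ^ 2 ∨ A = Qm p (firstIdx p hp) j h}

def Hgrp : Subgroup (Matrix.SpecialLinearGroup (Fin p) ℤ) :=
  Subgroup.closure (genSet p hp)

lemma memR2 (j : Fin p) (h : firstIdx p hp ≠ j) (n : ℤ) :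
    myR (firstIdx p hp) j h (2*n) ∈ Hgrp p hp := by
  have h2 : Rm p (firstIdx p hp) j h ^ 2 = myR (firstIdx p hp) j h 2 := by
    rw [Rm_eq, sq, myR_mul]; norm_num
  have e : myR (firstIdx p hp) j h (2*n) = (Rm p (firstIdx p hp) j h ^ 2) ^ n := by
    rw [h2, myR_zpow]
  rw [e]
  exact Subgroup.zpow_mem _ (Subgroup.subset_closure (by simp only [genSet, Set.mem_setOf_eq]; exact ⟨j, h, Or.inl rfl⟩)) n

lemma memQ (j : Fin p) (h : firstIdx p hp ≠ j) : Qm p (firstIdx p hp) j h ∈ Hgrp p hp :=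
  Subgroup.subset_closure (by simp only [genSet, Set.mem_setOf_eq]; exact ⟨j, h, Or.inr rfl⟩)

lemma colOp (j : Fin p) (h : firstIdx p hp ≠ j) (n : ℤ) :
    ∃ K ∈ Hgrp p hp, ∀ x : Fin p → ℤ, (K : Matrix (Fin p) (Fin p) ℤ) *ᵥ x
      = fun k => if k = j then x j + 2*n*x (firstIdx p hp) else x k := by
  refine ⟨Qm p _ j h * (myR _ j h (2*(-n)) * (Qm p _ j h)⁻¹),
    mul_mem (memQ p hp j h) (mul_mem (memR2 p hp j h (-n)) (inv_mem (memQ p hp j h))), ?_⟩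
  intro x
  rw [Matrix.SpecialLinearGroup.coe_mul, Matrix.SpecialLinearGroup.coe_mul,
    ← Matrix.mulVec_mulVec, ← Matrix.mulVec_mulVec, Qm_inv_mulVec, myR_mulVec, Qm_mulVec]
  funext k
  by_cases h1 : k = firstIdx p hp
  · subst h1
    simp [h, h.symm]
  · by_cases h2 : k = j
    · subst h2
      simp [h, h.symm, h1]
    · simp [h1, h2]

lemma unimod (K : Matrix.SpecialLinearGroup (Fin p) ℤ) (x c : Fin p → ℤ) (h : x ⬝ᵥ c = 1) :
    ∃ c', ((K : Matrix (Fin p) (Fin p) ℤ) *ᵥ x) ⬝ᵥ c' = 1 := by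
  refine ⟨Matrix.vecMul c ((K⁻¹ : Matrix.SpecialLinearGroup (Fin p) ℤ) : Matrix (Fin p) (Fin p) ℤ), ?_⟩
  rw [dotProduct_comm, Matrix.dotProduct_mulVec, Matrix.vecMul_vecMul,
    ← Matrix.SpecialLinearGroup.coe_mul, inv_mul_cancel, Matrix.SpecialLinearGroup.coe_one,
    Matrix.vecMul_one, dotProduct_comm, h]

lemma euclid (j : Fin p) (h : firstIdx p hp ≠ j) :
    ∀ N : ℕ, ∀ x : Fin p → ℤ, Odd (x (firstIdx p hp)) → Even (x j) →
      (x (firstIdx p hp)).natAbs + (x j).natAbs ≤ N →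
      ∃ K ∈ Hgrp p hp, ((K : Matrix (Fin p) (Fin p) ℤ) *ᵥ x) j = 0 ∧
        Odd (((K : Matrix (Fin p) (Fin p) ℤ) *ᵥ x) (firstIdx p hp)) ∧
        ∀ k, k ≠ firstIdx p hp → k ≠ j → ((K : Matrix (Fin p) (Fin p) ℤ) *ᵥ x) k = x k := by
  intro N
  induction N using Nat.strong_induction_on with
  | _ N ih =>
  intro x hodd heven hN
  by_cases hz : x j = 0
  · exact ⟨1, one_mem _, by simp [hz], by simpa using hodd, by intros; simp⟩
  have hxo : x (firstIdx p hp) ≠ 0 := by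
    intro h0
    rw [h0] at hodd
    exact (Int.not_odd_iff_even.mpr Even.zero) hodd
  by_cases hlt : (x j).natAbs < (x (firstIdx p hp)).natAbs
  · -- reduce the first coordinate
    obtain ⟨s, hs⟩ := int_red (x (firstIdx p hp)) (x j) hz
    set K1 := myR (firstIdx p hp) j h (2*s) with hK1def
    have hK1 : K1 ∈ Hgrp p hp := memR2 p hp j h s
    have hact : (K1 : Matrix (Fin p) (Fin p) ℤ) *ᵥ x
        = fun k => if k = firstIdx p hp then x (firstIdx p hp) + 2*s * x j else x k :=
      myR_mulVec _ _ _ _ _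
    set x' := (K1 : Matrix (Fin p) (Fin p) ℤ) *ᵥ x with hx'
    have hx'o : x' (firstIdx p hp) = x (firstIdx p hp) + 2*s*x j := by rw [hact]; simp
    have hx'j : x' j = x j := by rw [hact]; simp [h.symm]
    have hx'k : ∀ k, k ≠ firstIdx p hp → x' k = x k := by
      intro k hk; rw [hact]; simp [hk]
    have hodd' : Odd (x' (firstIdx p hp)) := by
      rw [hx'o]; exact hodd.add_even ⟨s * x j, by ring⟩
    have heven' : Even (x' j) := by rw [hx'j]; exact heven
    have hmes : (x' (firstIdx p hp)).natAbs + (x' j).natAbs < N := by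
      rw [hx'o, hx'j]
      omega
    obtain ⟨K2, hK2, hr1, hr2, hr3⟩ :=
      ih _ hmes x' hodd' heven' le_rfl
    refine ⟨K2 * K1, mul_mem hK2 hK1, ?_, ?_, ?_⟩ <;>
      rw [Matrix.SpecialLinearGroup.coe_mul, ← Matrix.mulVec_mulVec, ← hx']
    · exact hr1
    · exact hr2
    · intro k hk1 hk2
      rw [hr3 k hk1 hk2, hx'k k hk1]
  · -- reduce the j coordinate
    have hgt : (x (firstIdx p hp)).natAbs < (x j).natAbs := by
      obtain ⟨m1, hm1⟩ := hodd
      obtain ⟨m2, hm2⟩ := heven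
      omega
    obtain ⟨s, hs⟩ := int_red (x j) (x (firstIdx p hp)) hxo
    obtain ⟨K1, hK1, hactK1⟩ := colOp p hp j h s
    have hact := hactK1 x
    set x' := (K1 : Matrix (Fin p) (Fin p) ℤ) *ᵥ x with hx'
    have hx'o : x' (firstIdx p hp) = x (firstIdx p hp) := by rw [hact]; simp [h]
    have hx'j : x' j = x j + 2*s*x (firstIdx p hp) := by rw [hact]; simp
    have hx'k : ∀ k, k ≠ j → x' k = x k := by
      intro k hk; rw [hact]; simp [hk]
    have hodd' : Odd (x' (firstIdx p hp)) := by rw [hx'o]; exact hodd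
    have heven' : Even (x' j) := by
      rw [hx'j]
      exact heven.add ⟨s * x (firstIdx p hp), by ring⟩
    have hmes : (x' (firstIdx p hp)).natAbs + (x' j).natAbs < N := by
      rw [hx'o, hx'j]
      omega
    obtain ⟨K2, hK2, hr1, hr2, hr3⟩ := ih _ hmes x' hodd' heven' le_rfl
    refine ⟨K2 * K1, mul_mem hK2 hK1, ?_, ?_, ?_⟩ <;>
      rw [Matrix.SpecialLinearGroup.coe_mul, ← Matrix.mulVec_mulVec, ← hx']
    · exact hr1
    · exact hr2
    · intro k hk1 hk2
      rw [hr3 k hk1 hk2, hx'k k hk2]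


lemma zeroAll : ∀ s : Finset (Fin p), ∀ x : Fin p → ℤ, Odd (x (firstIdx p hp)) →
    (∀ k, k ≠ firstIdx p hp → Even (x k)) →
    (∀ k, k ≠ firstIdx p hp → k ∉ s → x k = 0) →
    ∃ K ∈ Hgrp p hp, Odd (((K : Matrix (Fin p) (Fin p) ℤ) *ᵥ x) (firstIdx p hp)) ∧
      ∀ k, k ≠ firstIdx p hp → ((K : Matrix (Fin p) (Fin p) ℤ) *ᵥ x) k = 0 := by
  intro s
  induction s using Finset.induction_on with
  | empty =>
    intro x h1 h2 h3
    exact ⟨1, one_mem _, by simpa using h1,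
      fun k hk => by simpa using h3 k hk (by simp)⟩
  | @insert a s ha ih =>
    intro x hodd heven hzero
    by_cases hao : a = firstIdx p hp
    · apply ih x hodd heven
      intro k hk hks
      apply hzero k hk
      rw [Finset.mem_insert, not_or]
      exact ⟨fun hcon => hk (hcon.trans hao), hks⟩
    · have h : firstIdx p hp ≠ a := Ne.symm hao
      obtain ⟨K1, hK1, h1j, h1odd, h1rest⟩ :=
        euclid p hp a h ((x (firstIdx p hp)).natAbs + (x a).natAbs) x hodd (heven a hao) le_rfl
      set x' := (K1 : Matrix (Fin p) (Fin p) ℤ) *ᵥ x with hx'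
      have heven' : ∀ k, k ≠ firstIdx p hp → Even (x' k) := by
        intro k hk
        by_cases hka : k = a
        · rw [hka, h1j]; exact Even.zero
        · rw [h1rest k hk hka]; exact heven k hk
      have hzero' : ∀ k, k ≠ firstIdx p hp → k ∉ s → x' k = 0 := by
        intro k hk hks
        by_cases hka : k = a
        · rw [hka]; exact h1j
        · rw [h1rest k hk hka]
          exact hzero k hk (by rw [Finset.mem_insert, not_or]; exact ⟨hka, hks⟩)
      obtain ⟨K2, hK2, h2odd, h2zero⟩ := ih x' h1odd heven' hzero'
      refine ⟨K2 * K1, mul_mem hK2 hK1, ?_, ?_⟩ <;>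
        rw [Matrix.SpecialLinearGroup.coe_mul, ← Matrix.mulVec_mulVec, ← hx']
      · exact h2odd
      · exact h2zero

lemma reduce (x c : Fin p → ℤ) (hc : x ⬝ᵥ c = 1) (k0 : Fin p) (hodd : Odd (x k0))
    (heven : ∀ k, k ≠ k0 → Even (x k)) :
    ∃ K ∈ Hgrp p hp, (K : Matrix (Fin p) (Fin p) ℤ) *ᵥ x = Pi.single (firstIdx p hp) 1 := by
  obtain ⟨K0, hK0, hx0odd, hx0even⟩ :
      ∃ K0 ∈ Hgrp p hp, Odd (((K0 : Matrix (Fin p) (Fin p) ℤ) *ᵥ x) (firstIdx p hp)) ∧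
        ∀ k, k ≠ firstIdx p hp → Even (((K0 : Matrix (Fin p) (Fin p) ℤ) *ᵥ x) k) := by
    by_cases hk0 : k0 = firstIdx p hp
    · refine ⟨1, one_mem _, by simpa [hk0] using hodd, fun k hk => ?_⟩
      simpa using heven k (fun hcon => hk (hcon.trans hk0))
    · have h : firstIdx p hp ≠ k0 := Ne.symm hk0
      refine ⟨Qm p (firstIdx p hp) k0 h, memQ p hp k0 h, ?_, ?_⟩
      · rw [Qm_mulVec]
        simpa using hodd.neg
      · intro k hk
        rw [Qm_mulVec]
        simp only [if_neg hk]
        by_cases hkk : k = k0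
        · rw [if_pos hkk]
          exact heven _ h
        · rw [if_neg hkk]
          exact heven k hkk
  set x1 := (K0 : Matrix (Fin p) (Fin p) ℤ) *ᵥ x with hx1
  obtain ⟨K1, hK1, h1odd, h1zero⟩ :=
    zeroAll p hp Finset.univ x1 hx0odd hx0even (fun k _ hk => absurd (Finset.mem_univ k) hk)
  set Ktot := K1 * K0 with hKtot
  have hy : (Ktot : Matrix (Fin p) (Fin p) ℤ) *ᵥ x = (K1 : Matrix (Fin p) (Fin p) ℤ) *ᵥ x1 := by
    rw [hKtot, Matrix.SpecialLinearGroup.coe_mul, ← Matrix.mulVec_mulVec, hx1]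
  set y := (Ktot : Matrix (Fin p) (Fin p) ℤ) *ᵥ x with hydef
  have hyodd : Odd (y (firstIdx p hp)) := by rw [hy]; exact h1odd
  have hyzero : ∀ k, k ≠ firstIdx p hp → y k = 0 := by
    intro k hk; rw [hy]; exact h1zero k hk
  obtain ⟨c', hc'⟩ := unimod p Ktot x c hc
  rw [← hydef] at hc'
  have hsum : y ⬝ᵥ c' = y (firstIdx p hp) * c' (firstIdx p hp) := by
    rw [dotProduct]
    rw [Finset.sum_eq_single (firstIdx p hp)]
    · intro b _ hb
      rw [hyzero b hb, zero_mul]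
    · intro hmem
      exact absurd (Finset.mem_univ _) hmem
  have hunit : IsUnit (y (firstIdx p hp)) :=
    IsUnit.of_mul_eq_one _ (hsum ▸ hc')
  rcases Int.isUnit_iff.mp hunit with h1 | hm1
  · refine ⟨Ktot, mul_mem hK1 hK0, ?_⟩
    rw [← hydef]
    funext k
    by_cases hk : k = firstIdx p hp
    · rw [hk, h1, Pi.single_eq_same]
    · rw [hyzero k hk, Pi.single_eq_of_ne hk]
  · -- y (firstIdx) = -1 : fix the sign with Qm²
    have hj1 : (1 : ℕ) < p := by omega
    set j1 : Fin p := ⟨1, hj1⟩ with hj1def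
    have hne : firstIdx p hp ≠ j1 := by
      simp [firstIdx, hj1def, Fin.ext_iff]
    refine ⟨Qm p (firstIdx p hp) j1 hne * (Qm p (firstIdx p hp) j1 hne * Ktot),
      mul_mem (memQ p hp j1 hne) (mul_mem (memQ p hp j1 hne) (mul_mem hK1 hK0)), ?_⟩
    rw [Matrix.SpecialLinearGroup.coe_mul, Matrix.SpecialLinearGroup.coe_mul,
      ← Matrix.mulVec_mulVec, ← Matrix.mulVec_mulVec, ← hydef, Qm_mulVec, Qm_mulVec]
    have hyj1 : y j1 = 0 := hyzero j1 (Ne.symm hne)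
    funext k
    by_cases hk : k = firstIdx p hp
    · rw [hk, Pi.single_eq_same]
      simp [hne, hne.symm, hyj1, hm1]
    · rw [Pi.single_eq_of_ne hk]
      by_cases hkj : k = j1
      · simp [hkj, hne.symm, hne, hyj1]
      · simp [hk, hkj, hyzero k hk]

end

/-- For any index `i` and any `U ∈ SL(p,ℤ)`, `U` can be written as `U = K * J` where `K`
is a word in the `R_{1j}²`, `Q_{1j}` (`1 < j ≤ p`), and the `(i,i)` entry of `J⁻¹`
equals `1` (equivalently, the `(i,i)` cofactor of `J` equals `1`). -/
theorem statement5 (p : ℕ) (hp : 2 ≤ p) (i : Fin p) (U : Matrix.SpecialLinearGroup (Fin p) ℤ) :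
    ∃ K J : Matrix.SpecialLinearGroup (Fin p) ℤ,
      K ∈ Subgroup.closure
        {A | ∃ (j : Fin p) (h : firstIdx p hp ≠ j),
          A = Rm p (firstIdx p hp) j h ^ 2 ∨ A = Qm p (firstIdx p hp) j h} ∧
      ((J⁻¹ : Matrix.SpecialLinearGroup (Fin p) ℤ) : Matrix (Fin p) (Fin p) ℤ) i i = 1 ∧
      U = K * J := by
  classical
  set v : Fin p → ℤ :=
    fun k => ((U⁻¹ : Matrix.SpecialLinearGroup (Fin p) ℤ) : Matrix (Fin p) (Fin p) ℤ) i k with hv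
  set cvec : Fin p → ℤ := fun k => (U : Matrix (Fin p) (Fin p) ℤ) k i with hcvec
  have hvc : v ⬝ᵥ cvec = 1 := by
    have h1 : ((U⁻¹ : Matrix.SpecialLinearGroup (Fin p) ℤ) : Matrix (Fin p) (Fin p) ℤ)
        * (U : Matrix (Fin p) (Fin p) ℤ) = 1 := by
      rw [← Matrix.SpecialLinearGroup.coe_mul, inv_mul_cancel, Matrix.SpecialLinearGroup.coe_one]
    calc v ⬝ᵥ cvec
        = (((U⁻¹ : Matrix.SpecialLinearGroup (Fin p) ℤ) : Matrix (Fin p) (Fin p) ℤ)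
            * (U : Matrix (Fin p) (Fin p) ℤ)) i i := by
          rw [Matrix.mul_apply]; rfl
      _ = 1 := by rw [h1, Matrix.one_apply_eq]
  have hex : ∃ k0, Odd (v k0) := by
    by_contra hcon
    push_neg at hcon
    have h2 : (2:ℤ) ∣ v ⬝ᵥ cvec := by
      rw [dotProduct]
      refine Finset.dvd_sum ?_
      intro k _
      obtain ⟨mk, hmk⟩ := Int.not_odd_iff_even.mp (hcon k)
      exact ⟨mk * cvec k, by rw [hmk]; ring⟩
    rw [hvc] at h2
    omega
  obtain ⟨k0, hk0odd⟩ := hex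
  obtain ⟨m, hm⟩ := hk0odd
  set b : ℤ := -(2*m*m) - 2*m with hb
  have h2b : 2*b = 1 - v k0 * v k0 := by rw [hb, hm]; ring
  set w : Fin p → ℤ := fun k => (if k = k0 then v k0 else 0) + 2*b*cvec k with hw
  have hvw : v ⬝ᵥ w = 1 := by
    have hterm : ∀ k, v k * w k = (if k = k0 then v k0 * v k0 else 0) + 2*b*(v k * cvec k) := by
      intro k
      rw [hw]
      by_cases h : k = k0
      · simp [h]; ring
      · simp [h]; ring
    have hsum : ∑ k, v k * cvec k = 1 := hvc
    rw [dotProduct, Finset.sum_congr rfl (fun k _ => hterm k), Finset.sum_add_distrib,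
      Finset.sum_ite_eq' Finset.univ k0, ← Finset.mul_sum, hsum]
    simp only [Finset.mem_univ, if_true, mul_one]
    linarith [h2b]
  have hwodd : Odd (w k0) := by
    have : w k0 = v k0 + 2*b*cvec k0 := by rw [hw]; simp
    rw [this]
    exact Odd.add_even (⟨m, hm⟩ : Odd (v k0)) ⟨b * cvec k0, by ring⟩
  have hweven : ∀ k, k ≠ k0 → Even (w k) := by
    intro k hk
    have : w k = 2*b*cvec k := by rw [hw]; simp [hk]
    rw [this]
    exact ⟨b * cvec k, by ring⟩
  obtain ⟨Kw, hKw, hKwx⟩ :=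
    reduce p hp w v (by rw [dotProduct_comm]; exact hvw) k0 hwodd hweven
  obtain ⟨Ke, hKe, hKex⟩ :=
    reduce p hp (Pi.single i 1) (Pi.single i 1) (by simp) i (by simpa using odd_one)
      (fun k hk => by simp [Pi.single_eq_of_ne hk])
  set K := Kw⁻¹ * Ke with hK
  have hKmem : K ∈ Hgrp p hp := mul_mem (inv_mem hKw) hKe
  have hcol : (K : Matrix (Fin p) (Fin p) ℤ) *ᵥ Pi.single i 1 = w := by
    rw [hK, Matrix.SpecialLinearGroup.coe_mul, ← Matrix.mulVec_mulVec, hKex, ← hKwx,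
      Matrix.mulVec_mulVec, ← Matrix.SpecialLinearGroup.coe_mul, inv_mul_cancel,
      Matrix.SpecialLinearGroup.coe_one, Matrix.one_mulVec]
  have hwk : ∀ r, (K : Matrix (Fin p) (Fin p) ℤ) r i = w r := by
    intro r
    have h1 := congrFun hcol r
    have h2 : ((K : Matrix (Fin p) (Fin p) ℤ) *ᵥ Pi.single i 1) r
        = (K : Matrix (Fin p) (Fin p) ℤ) r i := by
      simp [Matrix.mulVec_single]
    rw [← h1, h2]
  refine ⟨K, K⁻¹ * U, hKmem, ?_, ?_⟩
  · rw [_root_.mul_inv_rev, inv_inv, Matrix.SpecialLinearGroup.coe_mul, Matrix.mul_apply]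
    calc ∑ k, ((U⁻¹ : Matrix.SpecialLinearGroup (Fin p) ℤ) : Matrix (Fin p) (Fin p) ℤ) i k
          * (K : Matrix (Fin p) (Fin p) ℤ) k i
        = ∑ k, v k * w k := Finset.sum_congr rfl (fun k _ => by rw [hwk k])
      _ = 1 := hvw
  · rw [mul_inv_cancel_left]
end

section
/- Let p ≥ 1. The right action of SL(p,ℤ) on the set of nonzero row vectors of (ℤ/2)^p via mod 2 reduction is transitive: for any nonzero row vectors v, w ∈ (ℤ/2)^p there exists U ∈ SL(p,ℤ) such that v·Ū = w, where Ū denotes the entrywise mod 2 reduction of U and v·Ū denotes row-vector-times-matrix multiplication over ℤ/2. -/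
open Matrix

lemma zmod2_eq_one_of_ne_zero : ∀ x : ZMod 2, x ≠ 0 → x = 1 := by decide

/-- Any matrix over `ZMod 2` with nonzero determinant lifts to an element of `SL(p, ℤ)`. -/
lemma lift_of_det_ne_zero {p : ℕ} (M : Matrix (Fin p) (Fin p) (ZMod 2))
    (hM : M.det ≠ 0) :
    ∃ U : Matrix.SpecialLinearGroup (Fin p) ℤ,
      (U : Matrix (Fin p) (Fin p) ℤ).map (Int.cast : ℤ → ZMod 2) = M := by
  haveI : Fact (Nat.Prime 2) := ⟨by norm_num⟩
  refine Matrix.diagonal_transvection_induction_of_det_ne_zero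
    (fun N => ∃ U : Matrix.SpecialLinearGroup (Fin p) ℤ,
      (U : Matrix (Fin p) (Fin p) ℤ).map (Int.cast : ℤ → ZMod 2) = N) M hM ?_ ?_ ?_
  · intro D hD
    have hD1 : ∀ i, D i = 1 := by
      intro i
      have h0 : D i ≠ 0 := fun h => hD (by simp [Matrix.det_diagonal, Finset.prod_eq_zero
        (Finset.mem_univ i) h])
      exact zmod2_eq_one_of_ne_zero _ h0
    have : Matrix.diagonal D = 1 := by
      ext i j; by_cases h : i = j <;> simp [Matrix.diagonal, Matrix.one_apply, h, hD1]
    refine ⟨1, ?_⟩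
    rw [this]
    ext i j
    by_cases h : i = j <;> simp [Matrix.one_apply, h]
  · rintro ⟨i, j, hij, c⟩
    refine ⟨⟨Matrix.transvection i j (ZMod.cast c : ℤ),
      by simp [Matrix.det_transvection_of_ne i j hij]⟩, ?_⟩
    ext a b
    simp only [Matrix.transvection, Matrix.TransvectionStruct.toMatrix_mk, Matrix.map_apply,
      Matrix.add_apply, Matrix.one_apply, Matrix.single]
    by_cases h : a = b <;> by_cases h' : a = i ∧ b = j <;>
      simp [h, h', ZMod.intCast_zmod_cast, Matrix.of_apply]
  · rintro A B _ _ ⟨U, hU⟩ ⟨V, hV⟩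
    refine ⟨U * V, ?_⟩
    have : ((U * V : Matrix.SpecialLinearGroup (Fin p) ℤ) : Matrix (Fin p) (Fin p) ℤ)
        = (U : Matrix (Fin p) (Fin p) ℤ) * V := rfl
    rw [this, show (Int.cast : ℤ → ZMod 2) = ⇑(Int.castRingHom (ZMod 2)) from rfl] at *
    rw [Matrix.map_mul, hU, hV]

/-- `updateRow 1 j w` squares to one over `ZMod 2` when `w j = 1`. -/
lemma updateRow_sq_eq_one {p : ℕ} (j : Fin p) (w : Fin p → ZMod 2) (hwj : w j = 1) :
    Matrix.updateRow (1 : Matrix (Fin p) (Fin p) (ZMod 2)) j w *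
      Matrix.updateRow 1 j w = 1 := by
  set A : Matrix (Fin p) (Fin p) (ZMod 2) :=
    Matrix.of (fun a b => if a = j then (w b - if j = b then 1 else 0) else 0) with hA
  have hT : Matrix.updateRow (1 : Matrix (Fin p) (Fin p) (ZMod 2)) j w = 1 + A := by
    ext a b
    by_cases h : a = j
    · subst h
      by_cases h' : a = b <;>
        simp [hA, Matrix.updateRow_apply, Matrix.one_apply, h', Matrix.of_apply]
    · simp [hA, Matrix.updateRow_apply, h, Matrix.one_apply]
  have hAA : A * A = 0 := by
    ext a b
    rw [Matrix.mul_apply]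
    have : ∀ l, A a l * A l b = 0 := by
      intro l
      by_cases hl : l = j
      · subst hl
        have : A a l = 0 := by
          by_cases h : a = l <;> simp [hA, Matrix.of_apply, h, hwj]
        rw [this, zero_mul]
      · have : A l b = 0 := by simp [hA, Matrix.of_apply, hl]
        rw [this, mul_zero]
    simp [this]
  have hAplus : A + A = 0 := by
    ext a b
    simp only [Matrix.add_apply, Matrix.zero_apply]
    exact CharTwo.add_self_eq_zero _
  rw [hT, show ((1 : Matrix (Fin p) (Fin p) (ZMod 2)) + A) * (1 + A)
      = 1 + (A + A) + A * A by noncomm_ring, hAplus, hAA, add_zero, add_zero]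

/-- For every nonzero `w : (ZMod 2)^p` there is a matrix with nonzero determinant whose
`vecMul` action sends the first standard basis vector to `w`. -/
lemma exists_matrix_single_to {p : ℕ} (i0 : Fin p) (w : Fin p → ZMod 2) (hw : w ≠ 0) :
    ∃ M : Matrix (Fin p) (Fin p) (ZMod 2), M.det ≠ 0 ∧
      Matrix.vecMul (Pi.single i0 1) M = w := by
  obtain ⟨j, hj⟩ : ∃ j, w j ≠ 0 := by
    by_contra h; push_neg at h; exact hw (funext fun j => h j)
  have hwj : w j = 1 := zmod2_eq_one_of_ne_zero _ hj
  set σ : Equiv.Perm (Fin p) := Equiv.swap i0 j with hσ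
  set P : Matrix (Fin p) (Fin p) (ZMod 2) := σ.permMatrix (ZMod 2) with hP
  set T : Matrix (Fin p) (Fin p) (ZMod 2) := Matrix.updateRow 1 j w with hT
  have hTT : T * T = 1 := updateRow_sq_eq_one j w hwj
  have hdetT : T.det ≠ 0 := by
    intro h
    have : T.det * T.det = 1 := by rw [← Matrix.det_mul, hTT, Matrix.det_one]
    rw [h, mul_zero] at this
    exact zero_ne_one this
  have hdetP : P.det ≠ 0 := by
    rw [hP, Matrix.det_permutation]
    rcases Int.units_eq_one_or (Equiv.Perm.sign σ) with h | h <;> rw [h] <;> decide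
  refine ⟨P * T, by simp [Matrix.det_mul, hdetP, hdetT], ?_⟩
  rw [← Matrix.vecMul_vecMul]
  have h1 : Matrix.vecMul (Pi.single i0 1) P = Pi.single j 1 := by
    rw [Matrix.single_one_vecMul]
    ext b
    simp [hP, Equiv.Perm.permMatrix, PEquiv.toMatrix_apply, hσ, Equiv.toPEquiv_apply,
      Equiv.swap_apply_left, Pi.single_apply, eq_comm]
  rw [h1, Matrix.single_one_vecMul, hT]; exact Matrix.updateRow_self

/-- The right action of `SL(p,ℤ)` on nonzero row vectors of `(ℤ/2)^p` via entrywise mod `2`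
reduction is transitive: for any nonzero row vectors `v, w` there is `U ∈ SL(p,ℤ)` with
`v · Ū = w`. -/
theorem statement6 (p : ℕ) (hp : 1 ≤ p) (v w : Fin p → ZMod 2) (hv : v ≠ 0) (hw : w ≠ 0) :
    ∃ U : Matrix.SpecialLinearGroup (Fin p) ℤ,
      Matrix.vecMul v ((U : Matrix (Fin p) (Fin p) ℤ).map (Int.cast : ℤ → ZMod 2)) = w := by
  haveI : Fact (Nat.Prime 2) := ⟨by norm_num⟩
  set i0 : Fin p := ⟨0, hp⟩
  obtain ⟨Mv, hdv, hv'⟩ := exists_matrix_single_to i0 v hv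
  obtain ⟨Mw, hdw, hw'⟩ := exists_matrix_single_to i0 w hw
  have hMvUnit : IsUnit Mv.det := isUnit_iff_ne_zero.mpr hdv
  set N : Matrix (Fin p) (Fin p) (ZMod 2) := Mv⁻¹ * Mw with hN
  have hdetN : N.det ≠ 0 := by
    rw [hN, Matrix.det_mul, Matrix.det_nonsing_inv]
    exact mul_ne_zero (by simp [Ring.inverse_eq_inv', inv_ne_zero hdv]) hdw
  have hvN : Matrix.vecMul v N = w := by
    rw [← hv', Matrix.vecMul_vecMul, hN, ← Matrix.mul_assoc,
      Matrix.mul_nonsing_inv _ hMvUnit, Matrix.one_mul, hw']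
  obtain ⟨U, hU⟩ := lift_of_det_ne_zero N hdetN
  exact ⟨U, by rw [hU, hvN]⟩
end

section
/- Let p ≥ 1. The set H = {U ∈ SL(p,ℤ) : for every column index j, the sum ∑_{i=1}^p U_{ij} is odd} is a subgroup of SL(p,ℤ), and its index in SL(p,ℤ) equals 2^p − 1. (H is exactly the stabilizer of the all-ones row vector (1, …, 1) ∈ (ℤ/2)^p under the right action of SL(p,ℤ) by mod 2 reduction.) -/
set_option synthInstance.maxHeartbeats 1000000
set_option maxHeartbeats 1000000

open Matrix

namespace Statement7Aux

variable {p : ℕ}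

/-- reduction mod 2 -/
def red (p : ℕ) : Matrix.SpecialLinearGroup (Fin p) ℤ →* Matrix.SpecialLinearGroup (Fin p) (ZMod 2) :=
  Matrix.SpecialLinearGroup.map (Int.castRingHom (ZMod 2))

instance act (p : ℕ) : MulAction (Matrix.SpecialLinearGroup (Fin p) ℤ) (Fin p → ZMod 2) where
  smul U v := v ᵥ* ((red p U⁻¹ : Matrix.SpecialLinearGroup (Fin p) (ZMod 2)) : Matrix (Fin p) (Fin p) (ZMod 2))
  one_smul v := by
    show v ᵥ* _ = v
    simp
  mul_smul U V v := by
    show v ᵥ* _ = (v ᵥ* _) ᵥ* _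
    rw [vecMul_vecMul]
    simp [_root_.mul_inv_rev]

lemma smul_def (U : Matrix.SpecialLinearGroup (Fin p) ℤ) (v : Fin p → ZMod 2) :
    U • v = v ᵥ* ((red p U⁻¹ : Matrix.SpecialLinearGroup (Fin p) (ZMod 2)) : Matrix (Fin p) (Fin p) (ZMod 2)) := rfl

lemma red_apply (U : Matrix.SpecialLinearGroup (Fin p) ℤ) (i j : Fin p) :
    ((red p U : Matrix.SpecialLinearGroup (Fin p) (ZMod 2)) : Matrix (Fin p) (Fin p) (ZMod 2)) i j
      = ((U : Matrix (Fin p) (Fin p) ℤ) i j : ZMod 2) := rfl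

lemma intCast_zmod_two_eq_one_iff_odd (n : ℤ) : (n : ZMod 2) = 1 ↔ Odd n := by
  have h1 : ∀ x : ZMod 2, x = 1 ↔ ¬ x = 0 := by decide
  rw [h1, ZMod.intCast_zmod_eq_zero_iff_dvd, Int.odd_iff]
  omega

lemma mem_stabilizer_iff_odd (U : Matrix.SpecialLinearGroup (Fin p) ℤ) :
    U ∈ MulAction.stabilizer (Matrix.SpecialLinearGroup (Fin p) ℤ) (1 : Fin p → ZMod 2) ↔
      ∀ j : Fin p, Odd (∑ i : Fin p, (U : Matrix (Fin p) (Fin p) ℤ) i j) := by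
  rw [MulAction.mem_stabilizer_iff]
  rw [smul_eq_iff_eq_inv_smul]
  rw [smul_def, inv_inv]
  rw [eq_comm, funext_iff]
  apply forall_congr'
  intro j
  rw [vecMul, dotProduct]
  simp only [Pi.one_apply, one_mul, red_apply]
  rw [← Int.cast_sum]
  exact intCast_zmod_two_eq_one_iff_odd _
  
lemma orbit_eq (hp : 1 ≤ p) :
    MulAction.orbit (Matrix.SpecialLinearGroup (Fin p) ℤ) (1 : Fin p → ZMod 2)
      = {v : Fin p → ZMod 2 | v ≠ 0} := by
  ext v
  simp only [MulAction.mem_orbit_iff, Set.mem_setOf_eq]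
  constructor
  · rintro ⟨U, rfl⟩ h0
    have h1 : (1 : Fin p → ZMod 2) = U⁻¹ • (0 : Fin p → ZMod 2) := by
      rw [← h0, inv_smul_smul]
    rw [smul_def, zero_vecMul] at h1
    have := congrFun h1 ⟨0, hp⟩
    simp at this
  · intro hv
    obtain ⟨k, hk⟩ : ∃ k, v k ≠ 0 := by
      by_contra h
      push_neg at h
      exact hv (funext fun j => h j)
    have hk1 : v k = 1 := by
      have : ∀ x : ZMod 2, x ≠ 0 → x = 1 := by decide
      exact this _ hk
    set w : Fin p → ℤ := fun j => if v j = 0 then 1 else 0 with hw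
    set A : Matrix (Fin p) (Fin p) ℤ :=
      1 + Matrix.replicateCol Unit (Pi.single k (1:ℤ)) * Matrix.replicateRow Unit w with hA
    have hdet : A.det = 1 := by
      rw [hA, Matrix.det_one_add_replicateCol_mul_replicateRow]
      rw [dotProduct_single]
      simp [hw, hk1]
    refine ⟨(⟨A, hdet⟩ : Matrix.SpecialLinearGroup (Fin p) ℤ)⁻¹, ?_⟩
    erw [smul_def, inv_inv]
    funext j
    rw [vecMul, dotProduct]
    simp only [Pi.one_apply, one_mul, red_apply]
    erw [← Int.cast_sum]
    have hsum : ∑ i : Fin p, A i j = 1 + w j := by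
      rw [hA]
      simp only [Matrix.add_apply, Matrix.one_apply]
      rw [Finset.sum_add_distrib]
      congr 1
      · simp
      · have : ∀ i, (Matrix.replicateCol Unit (Pi.single k (1:ℤ)) * Matrix.replicateRow Unit w) i j
            = (Pi.single k (1:ℤ) : Fin p → ℤ) i * w j := by
          intro i
          simp [Matrix.mul_apply, Matrix.replicateCol, Matrix.replicateRow]
        rw [Finset.sum_congr rfl fun i _ => this i]
        rw [← Finset.sum_mul]
        simp
    rw [hsum, hw]
    by_cases h : v j = 0
    · rw [h]
      simp only [h, if_true]
      push_cast
      decide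
    · have : ∀ x : ZMod 2, x ≠ 0 → x = 1 := by decide
      rw [this _ h]
      simp [h]

end Statement7Aux

/-- The set of matrices in `SL(p,ℤ)` with all column sums odd is a subgroup, of index
exactly `2^p − 1`. -/
theorem statement7 (p : ℕ) (hp : 1 ≤ p) :
    ∃ H : Subgroup (Matrix.SpecialLinearGroup (Fin p) ℤ),
      (∀ U : Matrix.SpecialLinearGroup (Fin p) ℤ,
        U ∈ H ↔ ∀ j : Fin p, Odd (∑ i : Fin p, (U : Matrix (Fin p) (Fin p) ℤ) i j)) ∧
      H.index = 2 ^ p - 1 := by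
  refine ⟨MulAction.stabilizer (Matrix.SpecialLinearGroup (Fin p) ℤ) (1 : Fin p → ZMod 2),
    fun U => Statement7Aux.mem_stabilizer_iff_odd U, ?_⟩
  rw [MulAction.index_stabilizer, Statement7Aux.orbit_eq hp]
  have : {v : Fin p → ZMod 2 | v ≠ 0} = ({0} : Set (Fin p → ZMod 2))ᶜ := by
    ext v; simp
  rw [this, Set.ncard_eq_toFinset_card', Set.toFinset_compl, Finset.card_compl]
  simp [Fintype.card_fun]
end

section
/- Let δ ≥ 2 be an integer. The map b_δ : S¹ × D̄² → S¹ × ℂ defined by b_δ(u, z) = (u^δ, (1/2)·u + (1/δ²)·u^{1−δ}·z), where S¹ ⊂ ℂ is the unit circle and D̄² ⊂ ℂ is the closed unit disk, is injective, and its image is contained in S¹ × {w ∈ ℂ : |w| < 1} (in fact |(1/2)·u + (1/δ²)·u^{1−δ}·z| ≤ 1/2 + 1/δ² < 1 for all u ∈ S¹ and z ∈ D̄²). Thus b_δ embeds the solid torus S¹ × D̄² into its own interior as a thickened closed braid (a (δ,1)-cable) with winding number δ. -/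
open Metric Finset

-- separation of points with equal n-th powers on the circle
lemma sep {a b : ℂ} (ha : ‖a‖ = 1) (hb : ‖b‖ = 1) {n : ℕ}
    (h : a ^ n = b ^ n) (hab : a ≠ b) :
    (n : ℝ) ≤ ‖a - b‖ * (n * (n - 1) / 2) := by
  have hsum : ∑ i ∈ range n, a ^ i * b ^ (n - 1 - i) = 0 := by
    have := geom_sum₂_mul a b n
    rw [h, sub_self] at this
    rcases mul_eq_zero.1 this with h' | h'
    · exact h'
    · exact absurd (sub_eq_zero.1 h') hab
  have key : (n : ℂ) * b ^ (n - 1) =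
      ∑ i ∈ range n, (b ^ (n - 1) - a ^ i * b ^ (n - 1 - i)) := by
    rw [Finset.sum_sub_distrib, hsum, sub_zero, Finset.sum_const, card_range, nsmul_eq_mul]
  have hnorm : ‖(n : ℂ) * b ^ (n - 1)‖ = (n : ℝ) := by
    simp [norm_pow, hb]
  have bound : ∀ i ∈ range n, ‖b ^ (n - 1) - a ^ i * b ^ (n - 1 - i)‖ ≤ (i : ℝ) * ‖a - b‖ := by
    intro i hi
    have hi' : i ≤ n - 1 := Nat.le_sub_one_of_lt (mem_range.1 hi)
    have hfac : b ^ (n - 1) - a ^ i * b ^ (n - 1 - i) = (b ^ i - a ^ i) * b ^ (n - 1 - i) := by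
      rw [sub_mul, ← pow_add]
      congr 2
      omega
    rw [hfac, norm_mul, norm_pow, hb, one_pow, mul_one]
    have := geom_sum₂_mul b a i
    calc ‖b ^ i - a ^ i‖ = ‖(∑ k ∈ range i, b ^ k * a ^ (i - 1 - k)) * (b - a)‖ := by rw [this]
      _ ≤ (i : ℝ) * ‖a - b‖ := by
          rw [norm_mul, norm_sub_rev]
          gcongr
          calc ‖∑ k ∈ range i, b ^ k * a ^ (i - 1 - k)‖
              ≤ ∑ k ∈ range i, ‖b ^ k * a ^ (i - 1 - k)‖ := norm_sum_le _ _
            _ = ∑ k ∈ range i, 1 := by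
                apply Finset.sum_congr rfl; intro k _
                simp [norm_pow, ha, hb]
            _ = (i : ℝ) := by simp
  calc (n : ℝ) = ‖(n : ℂ) * b ^ (n - 1)‖ := hnorm.symm
    _ ≤ ∑ i ∈ range n, ‖b ^ (n - 1) - a ^ i * b ^ (n - 1 - i)‖ := by
        rw [key]; exact norm_sum_le _ _
    _ ≤ ∑ i ∈ range n, (i : ℝ) * ‖a - b‖ := Finset.sum_le_sum bound
    _ = (∑ i ∈ range n, (i : ℝ)) * ‖a - b‖ := by rw [← Finset.sum_mul]
    _ = ‖a - b‖ * (n * (n - 1) / 2) := by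
        rw [mul_comm]
        congr 1
        have := Finset.sum_range_id_mul_two n
        have : ((∑ i ∈ range n, i : ℕ) : ℝ) * 2 = (n : ℝ) * ((n : ℝ) - 1) := by
          rcases Nat.eq_zero_or_pos n with rfl | hn
          · simp
          · have h2 : ((n * (n-1) : ℕ) : ℝ) = (n:ℝ)*((n:ℝ)-1) := by
              rw [Nat.cast_mul, Nat.cast_sub hn]; push_cast; ring
            rw [← h2, ← this]; push_cast; ring
        push_cast at this ⊢
        linarith

/-- For an integer `δ ≥ 2`, the map `b_δ(u, z) = (u^δ, (1/2)u + (1/δ²)u^{1−δ}z)` is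
injective on the solid torus `S¹ × D̄²`, satisfies the bound
`‖(1/2)u + (1/δ²)u^{1−δ}z‖ ≤ 1/2 + 1/δ² < 1`, and hence maps `S¹ × D̄²` into
`S¹ × {w : ‖w‖ < 1}`. -/
theorem statement8 (δ : ℤ) (hδ : 2 ≤ δ) :
    Set.InjOn
      (fun uz : ℂ × ℂ =>
        (uz.1 ^ δ, (1 / 2 : ℂ) * uz.1 + (1 / (δ : ℂ) ^ 2) * uz.1 ^ (1 - δ) * uz.2))
      (sphere (0 : ℂ) 1 ×ˢ closedBall (0 : ℂ) 1) ∧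
    (∀ u ∈ sphere (0 : ℂ) 1, ∀ z ∈ closedBall (0 : ℂ) 1,
      ‖(1 / 2 : ℂ) * u + (1 / (δ : ℂ) ^ 2) * u ^ (1 - δ) * z‖ ≤ 1 / 2 + 1 / (δ : ℝ) ^ 2) ∧
    (1 / 2 + 1 / (δ : ℝ) ^ 2 < 1) ∧
    (∀ uz ∈ sphere (0 : ℂ) 1 ×ˢ closedBall (0 : ℂ) 1,
      (uz.1 ^ δ, (1 / 2 : ℂ) * uz.1 + (1 / (δ : ℂ) ^ 2) * uz.1 ^ (1 - δ) * uz.2) ∈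
        sphere (0 : ℂ) 1 ×ˢ ball (0 : ℂ) 1) := by
  have hδR : (2 : ℝ) ≤ (δ : ℝ) := by exact_mod_cast hδ
  have hcnorm : ‖(1 / (δ : ℂ) ^ 2)‖ = 1 / (δ : ℝ) ^ 2 := by
    simp only [norm_div, norm_one, norm_pow]
    congr 2
    rw [Complex.norm_intCast]
    rw [abs_of_pos]; linarith
  -- the norm bound
  have hbound : ∀ u ∈ sphere (0 : ℂ) 1, ∀ z ∈ closedBall (0 : ℂ) 1,
      ‖(1 / 2 : ℂ) * u + (1 / (δ : ℂ) ^ 2) * u ^ (1 - δ) * z‖ ≤ 1 / 2 + 1 / (δ : ℝ) ^ 2 := by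
    intro u hu z hz
    have hu1 : ‖u‖ = 1 := mem_sphere_zero_iff_norm.1 hu
    have hz1 : ‖z‖ ≤ 1 := mem_closedBall_zero_iff.1 hz
    calc ‖(1 / 2 : ℂ) * u + (1 / (δ : ℂ) ^ 2) * u ^ (1 - δ) * z‖
        ≤ ‖(1 / 2 : ℂ) * u‖ + ‖(1 / (δ : ℂ) ^ 2) * u ^ (1 - δ) * z‖ := norm_add_le _ _
      _ ≤ 1 / 2 + 1 / (δ : ℝ) ^ 2 := by
          rw [norm_mul, norm_mul, norm_mul, hcnorm, norm_zpow, hu1, one_zpow]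
          have : ‖(1 / 2 : ℂ)‖ = 1 / 2 := by norm_num
          rw [this]
          have hpos : (0 : ℝ) < 1 / (δ : ℝ) ^ 2 := by positivity
          nlinarith
  have hlt : (1 / 2 + 1 / (δ : ℝ) ^ 2 < 1) := by
    have : 1 / (δ : ℝ) ^ 2 ≤ 1 / 4 := by
      rw [div_le_div_iff₀ (by positivity) (by norm_num)]
      nlinarith
    linarith
  refine ⟨?_, hbound, hlt, ?_⟩
  · -- injectivity
    rintro ⟨u₁, z₁⟩ ⟨hu₁, hz₁⟩ ⟨u₂, z₂⟩ ⟨hu₂, hz₂⟩ heq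
    simp only [Prod.mk.injEq] at heq
    obtain ⟨h1, h2⟩ := heq
    have hu1n : ‖u₁‖ = 1 := mem_sphere_zero_iff_norm.1 hu₁
    have hu2n : ‖u₂‖ = 1 := mem_sphere_zero_iff_norm.1 hu₂
    have hz1n : ‖z₁‖ ≤ 1 := mem_closedBall_zero_iff.1 hz₁
    have hz2n : ‖z₂‖ ≤ 1 := mem_closedBall_zero_iff.1 hz₂
    set n := δ.toNat with hn
    have hnδ : (n : ℤ) = δ := Int.toNat_of_nonneg (by linarith)
    have hnR : ((n : ℝ)) = (δ : ℝ) := by exact_mod_cast congrArg (Int.cast : ℤ → ℝ) hnδ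
    have huu : u₁ = u₂ := by
      by_contra hne
      have hpow : u₁ ^ n = u₂ ^ n := by
        rw [← zpow_natCast u₁, ← zpow_natCast u₂, hnδ]; exact h1
      have hsep := sep hu1n hu2n hpow hne
      -- from h2, bound ‖u₁ - u₂‖
      have hre : (1 / 2 : ℂ) * (u₁ - u₂) =
          (1 / (δ : ℂ) ^ 2) * u₂ ^ (1 - δ) * z₂ - (1 / (δ : ℂ) ^ 2) * u₁ ^ (1 - δ) * z₁ := by
        linear_combination h2
      have hsmall : (1 / 2 : ℝ) * ‖u₁ - u₂‖ ≤ 2 / (δ : ℝ) ^ 2 := by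
        have := norm_sub_le ((1 / (δ : ℂ) ^ 2) * u₂ ^ (1 - δ) * z₂)
          ((1 / (δ : ℂ) ^ 2) * u₁ ^ (1 - δ) * z₁)
        have e1 : ‖(1 / (δ : ℂ) ^ 2) * u₂ ^ (1 - δ) * z₂‖ ≤ 1 / (δ : ℝ) ^ 2 := by
          rw [norm_mul, norm_mul, hcnorm, norm_zpow, hu2n, one_zpow]
          have hpos : (0 : ℝ) < 1 / (δ : ℝ) ^ 2 := by positivity
          nlinarith
        have e2 : ‖(1 / (δ : ℂ) ^ 2) * u₁ ^ (1 - δ) * z₁‖ ≤ 1 / (δ : ℝ) ^ 2 := by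
          rw [norm_mul, norm_mul, hcnorm, norm_zpow, hu1n, one_zpow]
          have hpos : (0 : ℝ) < 1 / (δ : ℝ) ^ 2 := by positivity
          nlinarith
        have e3 : ‖(1 / 2 : ℂ) * (u₁ - u₂)‖ = (1 / 2 : ℝ) * ‖u₁ - u₂‖ := by
          rw [norm_mul]; norm_num
        rw [← e3, hre]
        calc ‖_ - _‖ ≤ _ + _ := norm_sub_le _ _
          _ ≤ 1 / (δ : ℝ) ^ 2 + 1 / (δ : ℝ) ^ 2 := add_le_add e1 e2
          _ = 2 / (δ : ℝ) ^ 2 := by ring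
      -- contradiction
      have hd0 : (0 : ℝ) ≤ ‖u₁ - u₂‖ := norm_nonneg _
      rw [hnR] at hsep
      have hδpos : (0 : ℝ) < (δ : ℝ) := by linarith
      have ht1 : (0 : ℝ) < (δ : ℝ) - 1 := by linarith
      have ht2 : (0 : ℝ) < (δ : ℝ) ^ 2 := by positivity
      have hd2 : 2 / ((δ : ℝ) - 1) ≤ ‖u₁ - u₂‖ := by
        rw [div_le_iff₀ ht1]
        nlinarith [hsep, hδpos]
      have hd3 : ‖u₁ - u₂‖ ≤ 4 / (δ : ℝ) ^ 2 := by
        rw [le_div_iff₀ ht2]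
        have h' := mul_le_mul_of_nonneg_right hsmall (le_of_lt ht2)
        rw [div_mul_cancel₀ _ (ne_of_gt ht2)] at h'
        linarith
      have htrans := le_trans hd2 hd3
      rw [div_le_div_iff₀ ht1 ht2] at htrans
      nlinarith [sq_nonneg ((δ : ℝ) - 1)]
    refine Prod.ext huu ?_
    subst huu
    have hkey : (1 / (δ : ℂ) ^ 2) * u₁ ^ (1 - δ) * z₁ = (1 / (δ : ℂ) ^ 2) * u₁ ^ (1 - δ) * z₂ := by
      linear_combination h2
    have hcne : (1 / (δ : ℂ) ^ 2) * u₁ ^ (1 - δ) ≠ 0 := by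
      apply mul_ne_zero
      · rw [div_ne_zero_iff]
        refine ⟨one_ne_zero, pow_ne_zero _ ?_⟩
        simp only [ne_eq, Int.cast_eq_zero]
        omega
      · apply zpow_ne_zero
        intro h0
        rw [h0] at hu1n; simp at hu1n
    show z₁ = z₂
    exact mul_left_cancel₀ hcne hkey
  · -- maps into sphere × ball
    rintro ⟨u, z⟩ ⟨hu, hz⟩
    refine ⟨?_, ?_⟩
    · rw [mem_sphere_zero_iff_norm, norm_zpow, mem_sphere_zero_iff_norm.1 hu, one_zpow]
    · rw [mem_ball_zero_iff]
      exact lt_of_le_of_lt (hbound u hu z hz) hlt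
end

section
/- The continuous loop g : S¹ → O(3) defined by g(u) = the 3×3 real matrix [[Re(u²), −Im(u²), 0], [Im(u²), Re(u²), 0], [0, 0, 1]] (the rotation about the third coordinate axis by twice the argument of u), which indeed takes values in the orthogonal group O(3), is null-homotopic: g is homotopic, through continuous maps from S¹ to O(3), to a constant map. -/
open Metric Matrix

noncomputable section

/-- Rotation about the z-axis by arg u. -/
def amat (u : ℂ) : Matrix (Fin 3) (Fin 3) ℝ :=
  !![u.re, -u.im, 0; u.im, u.re, 0; 0, 0, 1]

/-- Rotation about the x-axis by angle π t. -/
def cmat (t : ℝ) : Matrix (Fin 3) (Fin 3) ℝ :=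
  !![1, 0, 0; 0, Real.cos (Real.pi * t), -Real.sin (Real.pi * t);
     0, Real.sin (Real.pi * t), Real.cos (Real.pi * t)]

lemma amat_cont : Continuous amat := by
  apply continuous_matrix
  intro i j
  fin_cases i <;> fin_cases j <;> simp [amat] <;> continuity

lemma cmat_cont : Continuous cmat := by
  apply continuous_matrix
  intro i j
  fin_cases i <;> fin_cases j <;> simp [cmat] <;> continuity

lemma amat_orth {u : ℂ} (hu : u.re ^ 2 + u.im ^ 2 = 1) : (amat u)ᵀ * amat u = 1 := by
  ext i j
  fin_cases i <;> fin_cases j <;>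
    simp [amat, Matrix.mul_apply, Fin.sum_univ_three, Matrix.one_apply, Matrix.transpose_apply, Matrix.vecHead, Matrix.vecTail] <;> nlinarith [hu]

lemma cmat_orth (t : ℝ) : (cmat t)ᵀ * cmat t = 1 := by
  have h := Real.sin_sq_add_cos_sq (Real.pi * t)
  ext i j
  fin_cases i <;> fin_cases j <;>
    simp [cmat, Matrix.mul_apply, Fin.sum_univ_three, Matrix.one_apply, Matrix.transpose_apply, Matrix.vecHead, Matrix.vecTail] <;> nlinarith [h]

/-- The loop `g : S¹ → O(3)` given by rotation about the third coordinate axis by twice the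
argument, `g(u) = [[Re u², −Im u², 0], [Im u², Re u², 0], [0, 0, 1]]`, indeed takes values
in `O(3)`, and is null-homotopic through continuous maps `S¹ → O(3)`. -/
theorem statement10 :
    ∀ g : ℂ → Matrix (Fin 3) (Fin 3) ℝ,
      (g = fun u => !![(u ^ 2).re, -(u ^ 2).im, 0; (u ^ 2).im, (u ^ 2).re, 0; 0, 0, 1]) →
      Continuous g ∧
      (∀ u ∈ sphere (0 : ℂ) 1, (g u)ᵀ * g u = 1) ∧
      ∃ (H : ℝ × ℂ → Matrix (Fin 3) (Fin 3) ℝ) (M₀ : Matrix (Fin 3) (Fin 3) ℝ),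
        ContinuousOn H (Set.Icc (0 : ℝ) 1 ×ˢ sphere (0 : ℂ) 1) ∧
        (∀ t ∈ Set.Icc (0 : ℝ) 1, ∀ u ∈ sphere (0 : ℂ) 1,
          (H (t, u))ᵀ * H (t, u) = 1) ∧
        (∀ u ∈ sphere (0 : ℂ) 1, H (0, u) = g u) ∧
        (∀ u ∈ sphere (0 : ℂ) 1, H (1, u) = M₀) := by
  intro g hg
  -- basic fact about sphere membership
  have hsph : ∀ u : ℂ, u ∈ sphere (0 : ℂ) 1 → u.re ^ 2 + u.im ^ 2 = 1 := by
    intro u hu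
    rw [mem_sphere_zero_iff_norm] at hu
    have : ‖u‖ = 1 := hu
    have h2 : Complex.normSq u = 1 := by
      rw [← Complex.sq_norm, this]; norm_num
    rw [Complex.normSq_apply] at h2
    nlinarith [h2]
  have hg2 : ∀ u : ℂ, g u = amat u * amat u := by
    intro u
    subst hg
    ext i j
    fin_cases i <;> fin_cases j <;>
      simp [amat, Matrix.mul_apply, Fin.sum_univ_three, pow_two, Complex.mul_re, Complex.mul_im] <;> ring
  refine ⟨?_, ?_, ?_⟩
  · have hgf : g = fun u => amat u * amat u := funext hg2
    rw [hgf]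
    exact amat_cont.matrix_mul amat_cont
  · intro u hu
    have hA := amat_orth (hsph u hu)
    rw [hg2 u]
    calc (amat u * amat u)ᵀ * (amat u * amat u)
        = (amat u)ᵀ * ((amat u)ᵀ * amat u) * amat u := by
          rw [Matrix.transpose_mul]; simp [Matrix.mul_assoc]
      _ = 1 := by rw [hA, Matrix.mul_one, hA]
  · refine ⟨fun p => cmat p.1 * amat p.2 * (cmat p.1)ᵀ * amat p.2, 1, ?_, ?_, ?_, ?_⟩
    · apply Continuous.continuousOn
      exact (((cmat_cont.comp continuous_fst).matrix_mul
        (amat_cont.comp continuous_snd)).matrix_mul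
        ((cmat_cont.comp continuous_fst).matrix_transpose)).matrix_mul
        (amat_cont.comp continuous_snd)
    · intro t _ u hu
      have hA := amat_orth (hsph u hu)
      have hC := cmat_orth t
      have hCC : cmat t * (cmat t)ᵀ = 1 := mul_eq_one_comm.mp hC
      have hAA : amat u * (amat u)ᵀ = 1 := mul_eq_one_comm.mp hA
      simp only [Matrix.transpose_mul, Matrix.transpose_transpose]
      calc (amat u)ᵀ * ((cmat t)ᵀᵀ * ((amat u)ᵀ * (cmat t)ᵀ)) *
            (cmat t * amat u * (cmat t)ᵀ * amat u)
          = (amat u)ᵀ * (cmat t * ((amat u)ᵀ * (((cmat t)ᵀ * cmat t) * (amat u *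
              ((cmat t)ᵀ * amat u))))) := by
            simp only [Matrix.transpose_transpose, Matrix.mul_assoc]
        _ = 1 := by
            rw [hC, Matrix.one_mul, ← Matrix.mul_assoc (amat u)ᵀ (amat u), hA,
              Matrix.one_mul, ← Matrix.mul_assoc (cmat t), hCC, Matrix.one_mul, hA]
    · intro u hu
      have hC0 : cmat 0 = 1 := by
        ext i j
        fin_cases i <;> fin_cases j <;> simp [cmat, Matrix.one_apply, Matrix.vecHead, Matrix.vecTail]
      rw [hg2 u]
      simp [hC0]
    · intro u hu
      have hu' := hsph u hu
      have hC1 : cmat 1 = !![1,0,0;0,-1,0;0,0,-1] := by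
        ext i j
        fin_cases i <;> fin_cases j <;> simp [cmat]
      show cmat 1 * amat u * (cmat 1)ᵀ * amat u = 1
      rw [hC1]
      ext i j
      fin_cases i <;> fin_cases j <;>
        simp [amat, Matrix.mul_apply, Fin.sum_univ_three, Matrix.one_apply,
          Matrix.transpose_apply, Matrix.vecHead, Matrix.vecTail, Matrix.vecMul, dotProduct] <;> nlinarith [hu']

end
end

section
/- Let p ≥ 1. Every continuous map f : (S¹)^p → S¹, where S¹ ⊂ ℂ is the unit circle, is homotopic to a monomial map: there exist integers m₁, …, m_p such that f is homotopic (as a continuous map (S¹)^p → S¹) to the map (u₁, …, u_p) ↦ u₁^{m₁}·u₂^{m₂} ⋯ u_p^{m_p}. -/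
open Complex Finset
open scoped Real

namespace Stmt11


lemma circle_dist_one (z w : Circle) : ‖((z / w : Circle) : ℂ) - 1‖ = ‖(z : ℂ) - w‖ := by
  have hw : ‖(w : ℂ)‖ = 1 := by exact Circle.norm_coe w
  have hw0 : (w : ℂ) ≠ 0 := w.coe_ne_zero
  rw [Circle.coe_div]
  rw [div_sub_one hw0, norm_div, hw, div_one]

lemma re_pos_of_close (z : Circle) (h : ‖(z : ℂ) - 1‖ < 1) : 0 < (z : ℂ).re := by
  have h1 : (1 - (z:ℂ)).re ≤ ‖1 - (z:ℂ)‖ := Complex.re_le_norm _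
  have : ‖1 - (z:ℂ)‖ = ‖(z:ℂ) - 1‖ := by
    rw [← norm_neg]; ring_nf
  simp only [Complex.sub_re, Complex.one_re] at h1
  have := this ▸ h1
  linarith

lemma arg_small (z : Circle) (h : ‖(z : ℂ) - 1‖ < 1) : |Complex.arg (z : ℂ)| < π / 2 :=
  Complex.abs_arg_lt_pi_div_two_iff.2 (Or.inl (re_pos_of_close z h))

lemma exp_inj_of_close {a b : ℝ} (h : Circle.exp a = Circle.exp b) (hab : |a - b| < 2 * π) :
    a = b := by
  obtain ⟨m, hm⟩ := Circle.exp_eq_exp.1 h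
  have hpi : (0:ℝ) < 2 * π := by positivity
  have heq : (m:ℝ) * (2 * π) = a - b := by rw [hm]; ring
  have h2 : |(m : ℝ)| * (2 * π) < 2 * π := by
    calc |(m:ℝ)| * (2 * π) = |(m:ℝ) * (2 * π)| := by rw [abs_mul, abs_of_pos hpi]
    _ = |a - b| := by rw [heq]
    _ < 2 * π := hab
  have hm1 : |(m:ℝ)| < 1 := by nlinarith [abs_nonneg ((m:ℝ))]
  have hm2 : |m| < 1 := by
    have : ((|m| : ℤ) : ℝ) < 1 := by push_cast; exact hm1
    exact_mod_cast this
  have : m = 0 := by rw [abs_lt] at hm2; omega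
  subst this
  simpa using hm

lemma circle_exp_sum {ι : Type*} (s : Finset ι) (h : ι → ℝ) :
    Circle.exp (∑ i ∈ s, h i) = ∏ i ∈ s, Circle.exp (h i) := by
  classical
  induction s using Finset.cons_induction with
  | empty => simp
  | cons a s ha ih => rw [Finset.sum_cons, Finset.prod_cons, Circle.exp_add, ih]

lemma exp_int_mul (t : ℤ) (r : ℝ) : Circle.exp ((t : ℝ) * r) = Circle.exp r ^ t := by
  have := map_zsmul Circle.expHom t r
  simpa [zsmul_eq_mul, ← ofMul_zpow] using this

lemma sum_range_mul (f : ℕ → ℝ) (n m : ℕ) :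
    ∑ t ∈ Finset.range (n * m), f t = ∑ k ∈ Finset.range n, ∑ j ∈ Finset.range m, f (k * m + j) := by
  induction n with
  | zero => simp
  | succ n ih =>
    rw [Finset.sum_range_succ, ← ih, Nat.succ_mul, Finset.sum_range_add]

variable {p : ℕ}

/-- point on segment from 0 to x -/
noncomputable def pt (x : Fin p → ℝ) (N k : ℕ) : Fin p → ℝ := ((k : ℝ) / (N : ℝ)) • x

/-- ratio of values of g at two segment points -/
noncomputable def R (g : (Fin p → ℝ) → Circle) (x : Fin p → ℝ) (N a b : ℕ) : Circle :=
  g (pt x N a) / g (pt x N b)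

/-- discrete lift along the segment from 0 to x with n steps -/
noncomputable def S (g : (Fin p → ℝ) → Circle) (x : Fin p → ℝ) (n : ℕ) : ℝ :=
  ∑ k ∈ Finset.range n, Complex.arg ((R g x n (k + 1) k : Circle) : ℂ)

/-- n is an admissible number of steps for x -/
def Adm (δ : ℝ) (x : Fin p → ℝ) (n : ℕ) : Prop := 0 < n ∧ ∀ i, |x i| ≤ (n : ℝ) * δ

lemma pt_zero (x : Fin p → ℝ) (N : ℕ) : pt x N 0 = 0 := by
  simp [pt]

lemma pt_self (x : Fin p → ℝ) {N : ℕ} (hN : 0 < N) : pt x N N = x := by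
  have : ((N : ℝ) / (N : ℝ)) = 1 := div_self (by exact_mod_cast hN.ne')
  simp [pt, this]

lemma pt_mul (x : Fin p → ℝ) {m : ℕ} (hm : 0 < m) (n k : ℕ) :
    pt x (n * m) (k * m) = pt x n k := by
  unfold pt
  congr 1
  push_cast
  rw [mul_div_mul_right _ _ (by exact_mod_cast hm.ne')]

lemma tele (g : (Fin p → ℝ) → Circle) (x : Fin p → ℝ) {n : ℕ} (hn : 0 < n) :
    Circle.exp (S g x n) = g x / g 0 := by
  have key : ∀ l, Circle.exp (∑ k ∈ Finset.range l,
      Complex.arg ((R g x n (k + 1) k : Circle) : ℂ)) = g (pt x n l) / g (pt x n 0) := by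
    intro l
    induction l with
    | zero => simp
    | succ l ih =>
      rw [Finset.sum_range_succ, Circle.exp_add, ih, Circle.exp_arg, R]
      exact div_mul_div_cancel' _ _ _
  have := key n
  rwa [pt_self x hn, pt_zero] at this

variable {g : (Fin p → ℝ) → Circle} {δ : ℝ} {x : Fin p → ℝ}

lemma small (H : ∀ y z : Fin p → ℝ, (∀ i, |y i - z i| ≤ δ) → ‖(g y : ℂ) - g z‖ < 1)
    {n : ℕ} (hadm : Adm δ x n) {m k l : ℕ} (hm : 0 < m) (hkl : k ≤ l) (hlk : l ≤ k + m) :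
    ‖((R g x (n * m) l k : Circle) : ℂ) - 1‖ < 1 := by
  obtain ⟨hn, hb⟩ := hadm
  rw [R, circle_dist_one]
  apply H
  intro i
  have hδ0 : 0 ≤ δ := by
    have := hb i
    nlinarith [abs_nonneg (x i), (by exact_mod_cast hn : (0:ℝ) < (n:ℝ))]
  have h1 : pt x (n*m) l i - pt x (n*m) k i = (((l:ℝ) - k) / ((n:ℝ) * m)) * x i := by
    simp only [pt, Pi.smul_apply, smul_eq_mul]
    push_cast
    ring
  rw [h1, abs_mul]
  have hn0 : (0:ℝ) < n := by exact_mod_cast hn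
  have hm0 : (0:ℝ) < m := by exact_mod_cast hm
  have hlm : (l:ℝ) - k ≤ m := by
    have : (l:ℝ) ≤ (k:ℝ) + m := by exact_mod_cast hlk
    linarith
  have hkl' : (0:ℝ) ≤ (l:ℝ) - k := by
    have : (k:ℝ) ≤ l := by exact_mod_cast hkl
    linarith
  have h2 : |((l:ℝ) - k) / ((n:ℝ) * m)| ≤ 1 / (n:ℝ) := by
    rw [abs_div, abs_of_pos (by positivity : (0:ℝ) < (n:ℝ) * m), _root_.abs_of_nonneg hkl',
      div_le_div_iff₀ (by positivity) hn0]
    nlinarith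
  calc |((l:ℝ) - k) / ((n:ℝ) * m)| * |x i|
      ≤ (1 / (n:ℝ)) * ((n:ℝ) * δ) :=
        mul_le_mul h2 (hb i) (abs_nonneg _) (by positivity)
    _ = δ := by field_simp

lemma step (H : ∀ y z : Fin p → ℝ, (∀ i, |y i - z i| ≤ δ) → ‖(g y : ℂ) - g z‖ < 1)
    {n : ℕ} (hadm : Adm δ x n) {m : ℕ} (hm : 0 < m) {k : ℕ} (hk : k < n) :
    ∑ j ∈ Finset.range m, Complex.arg ((R g x (n * m) (k * m + j + 1) (k * m + j) : Circle) : ℂ)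
      = Complex.arg ((R g x n (k + 1) k : Circle) : ℂ) := by
  have hpi : (0:ℝ) < π := Real.pi_pos
  have claim : ∀ l, l ≤ m →
      ∑ j ∈ Finset.range l, Complex.arg ((R g x (n * m) (k * m + j + 1) (k * m + j) : Circle) : ℂ)
        = Complex.arg ((R g x (n * m) (k * m + l) (k * m) : Circle) : ℂ) := by
    intro l
    induction l with
    | zero =>
      intro _
      simp [R, div_self']
    | succ l ih =>
      intro hl
      have hl' : l ≤ m := by omega
      rw [Finset.sum_range_succ, ih hl']
      -- three smallness facts
      have s1 : ‖((R g x (n * m) (k * m + l) (k * m) : Circle) : ℂ) - 1‖ < 1 :=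
        small H hadm hm (Nat.le_add_right _ _) (by omega)
      have s2 : ‖((R g x (n * m) (k * m + l + 1) (k * m + l) : Circle) : ℂ) - 1‖ < 1 :=
        small H hadm hm (Nat.le_add_right _ _) (by omega)
      have s3 : ‖((R g x (n * m) (k * m + (l + 1)) (k * m) : Circle) : ℂ) - 1‖ < 1 :=
        small H hadm hm (Nat.le_add_right _ _) (by omega)
      have a1 := arg_small _ s1
      have a2 := arg_small _ s2
      have a3 := arg_small _ s3
      apply exp_inj_of_close
      · rw [Circle.exp_add, Circle.exp_arg, Circle.exp_arg, Circle.exp_arg, R, R, R]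
        have : k * m + (l + 1) = k * m + l + 1 := by omega
        rw [this]
        exact div_mul_div_cancel' _ _ _
      · rw [abs_sub_comm]
        calc |Complex.arg ((R g x (n*m) (k*m+(l+1)) (k*m) : Circle) : ℂ)
              - (Complex.arg ((R g x (n*m) (k*m+l) (k*m) : Circle) : ℂ)
                + Complex.arg ((R g x (n*m) (k*m+l+1) (k*m+l) : Circle) : ℂ))|
            ≤ |Complex.arg ((R g x (n*m) (k*m+(l+1)) (k*m) : Circle) : ℂ)|
              + (|Complex.arg ((R g x (n*m) (k*m+l) (k*m) : Circle) : ℂ)|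
                + |Complex.arg ((R g x (n*m) (k*m+l+1) (k*m+l) : Circle) : ℂ)|) := by
              apply (abs_sub _ _).trans
              gcongr
              exact abs_add_le _ _
          _ < π/2 + (π/2 + π/2) := by gcongr
          _ < 2 * π := by linarith
  have := claim m le_rfl
  rw [this]
  congr 2
  · rw [R, R]
    have h1 : k * m + m = (k+1) * m := by ring
    rw [h1, pt_mul x hm, pt_mul x hm]

lemma refine (H : ∀ y z : Fin p → ℝ, (∀ i, |y i - z i| ≤ δ) → ‖(g y : ℂ) - g z‖ < 1)
    {n : ℕ} (hadm : Adm δ x n) {m : ℕ} (hm : 0 < m) : S g x (n * m) = S g x n := by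
  rw [S, S, sum_range_mul]
  exact Finset.sum_congr rfl fun k hk => step H hadm hm (Finset.mem_range.1 hk)

lemma wd (H : ∀ y z : Fin p → ℝ, (∀ i, |y i - z i| ≤ δ) → ‖(g y : ℂ) - g z‖ < 1)
    {n n' : ℕ} (hadm : Adm δ x n) (hadm' : Adm δ x n') : S g x n = S g x n' := by
  rw [← refine H hadm hadm'.1, mul_comm, refine H hadm' hadm.1]

/-- choice of an admissible step number -/
noncomputable def Nx (δ : ℝ) (x : Fin p → ℝ) : ℕ := ⌈(∑ i, |x i|) / δ⌉₊ + 1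

lemma adm_Nx (hδ : 0 < δ) (x : Fin p → ℝ) : Adm δ x (Nx δ x) := by
  refine ⟨Nat.succ_pos _, fun i => ?_⟩
  have h1 : |x i| ≤ ∑ j, |x j| :=
    Finset.single_le_sum (fun j _ => abs_nonneg (x j)) (Finset.mem_univ i)
  have h2 : (∑ j, |x j|) ≤ (⌈(∑ j, |x j|) / δ⌉₊ : ℝ) * δ := by
    rw [← div_le_iff₀ hδ]
    exact Nat.le_ceil _
  have h3 : ((⌈(∑ j, |x j|) / δ⌉₊ : ℝ)) * δ ≤ ((Nx δ x : ℕ) : ℝ) * δ := by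
    have : ((⌈(∑ j, |x j|) / δ⌉₊ : ℕ) : ℝ) ≤ ((Nx δ x : ℕ) : ℝ) := by
      exact_mod_cast Nat.le_succ _
    nlinarith
  linarith

/-- the lift of g along the segment from 0 to x -/
noncomputable def F (g : (Fin p → ℝ) → Circle) (δ : ℝ) (x : Fin p → ℝ) : ℝ :=
  S g x (Nx δ x)

lemma F_eq (H : ∀ y z : Fin p → ℝ, (∀ i, |y i - z i| ≤ δ) → ‖(g y : ℂ) - g z‖ < 1)
    (hδ : 0 < δ) {n : ℕ} (hadm : Adm δ x n) : F g δ x = S g x n :=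
  wd H (adm_Nx hδ x) hadm

lemma exp_F (hδ : 0 < δ) : Circle.exp (F g δ x) = g x / g 0 :=
  tele g x (Nat.succ_pos _)

lemma F_cont (hg : Continuous g) (hδ : 0 < δ)
    (H : ∀ y z : Fin p → ℝ, (∀ i, |y i - z i| ≤ δ) → ‖(g y : ℂ) - g z‖ < 1) :
    Continuous (F g δ) := by
  rw [continuous_iff_continuousAt]
  intro x₀
  set n : ℕ := ⌈((∑ i, |x₀ i|) + 1) / δ⌉₊ + 1 with hn
  have hball : ∀ y ∈ Metric.ball x₀ 1, Adm δ y n := by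
    intro y hy
    refine ⟨Nat.succ_pos _, fun i => ?_⟩
    have hd : |y i - x₀ i| ≤ dist y x₀ := by
      rw [← Real.dist_eq]; exact dist_le_pi_dist y x₀ i
    have h1 : |y i| ≤ (∑ j, |x₀ j|) + 1 := by
      have : |x₀ i| ≤ ∑ j, |x₀ j| :=
        Finset.single_le_sum (fun j _ => abs_nonneg (x₀ j)) (Finset.mem_univ i)
      have hlt : dist y x₀ < 1 := Metric.mem_ball.1 hy
      calc |y i| ≤ |x₀ i| + |y i - x₀ i| := by
            have := abs_sub_abs_le_abs_sub (y i) (x₀ i); linarith [abs_sub_comm (y i) (x₀ i) ▸ this]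
        _ ≤ (∑ j, |x₀ j|) + 1 := by linarith
    have h2 : (∑ j, |x₀ j|) + 1 ≤ (⌈((∑ j, |x₀ j|) + 1) / δ⌉₊ : ℝ) * δ := by
      rw [← div_le_iff₀ hδ]; exact Nat.le_ceil _
    have h3 : ((⌈((∑ j, |x₀ j|) + 1) / δ⌉₊ : ℕ) : ℝ) * δ ≤ (n : ℝ) * δ := by
      have : ((⌈((∑ j, |x₀ j|) + 1) / δ⌉₊ : ℕ) : ℝ) ≤ (n : ℝ) := by
        exact_mod_cast Nat.le_succ _
      nlinarith
    linarith
  have hx₀ : x₀ ∈ Metric.ball x₀ 1 := Metric.mem_ball_self one_pos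
  have heq : (F g δ) =ᶠ[nhds x₀] (fun y => S g y n) := by
    filter_upwards [Metric.ball_mem_nhds x₀ one_pos] with y hy
    exact F_eq H hδ (hball y hy)
  refine ContinuousAt.congr ?_ heq.symm
  apply tendsto_finset_sum
  intro k _
  have hR : Continuous fun y : Fin p → ℝ => R g y n (k + 1) k := by
    unfold R
    exact Continuous.div' (hg.comp (by unfold pt; fun_prop))
      (hg.comp (by unfold pt; fun_prop))
  have hinner : Continuous fun y : Fin p → ℝ => ((R g y n (k + 1) k : Circle) : ℂ) :=
    continuous_subtype_val.comp hR
  have hsmall : ‖((R g x₀ n (k + 1) k : Circle) : ℂ) - 1‖ < 1 := by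
    have := small H (hball x₀ hx₀) (m := 1) one_pos (Nat.le_succ k) (by omega)
    rwa [mul_one] at this
  have hre : 0 < ((R g x₀ n (k + 1) k : Circle) : ℂ).re := by
    have h1 : ((R g x₀ n (k+1) k : Circle) : ℂ) - 1 ≠ -2 → True := fun _ => trivial
    have := arg_small (R g x₀ n (k+1) k) hsmall
    -- derive re pos from closeness
    have h2 : (1 - ((R g x₀ n (k+1) k : Circle) : ℂ)).re ≤
        ‖1 - ((R g x₀ n (k+1) k : Circle) : ℂ)‖ := Complex.re_le_norm _
    have h3 : ‖1 - ((R g x₀ n (k+1) k : Circle) : ℂ)‖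
        = ‖((R g x₀ n (k+1) k : Circle) : ℂ) - 1‖ := by
      rw [← norm_neg]; ring_nf
    simp only [Complex.sub_re, Complex.one_re] at h2
    rw [h3] at h2
    linarith
  have hslit : ((R g x₀ n (k + 1) k : Circle) : ℂ) ∈ Complex.slitPlane :=
    Complex.mem_slitPlane_iff.2 (Or.inl hre)
  exact ContinuousAt.comp (g := Complex.arg)
    (f := fun y : Fin p → ℝ => ((R g y n (k + 1) k : Circle) : ℂ)) (x := x₀)
    (Complex.continuousAt_arg hslit) hinner.continuousAt

lemma int_const {X : Type*} [TopologicalSpace X] [PreconnectedSpace X]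
    {c : X → ℝ} (hc : Continuous c) (hint : ∀ x, ∃ k : ℤ, c x = k * (2 * π)) (x y : X) :
    c x = c y := by
  have hpi := Real.pi_pos
  by_contra hne
  wlog hlt : c x < c y generalizing x y
  · exact this y x (Ne.symm hne) ((lt_or_gt_of_ne hne).resolve_left hlt)
  obtain ⟨kx, hkx⟩ := hint x
  obtain ⟨ky, hky⟩ := hint y
  have hk : kx < ky := by
    have : (kx : ℝ) < ky := by nlinarith
    exact_mod_cast this
  have hk' : (kx : ℝ) + 1 ≤ ky := by exact_mod_cast hk
  have hv : (kx : ℝ) * (2 * π) + π ∈ Set.Icc (c x) (c y) :=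
    ⟨by rw [hkx]; linarith, by rw [hky]; nlinarith⟩
  obtain ⟨z, hz⟩ := intermediate_value_univ x y hc hv
  obtain ⟨kz, hkz⟩ := hint z
  rw [hkz] at hz
  have h2 : (2 * kz : ℝ) = 2 * kx + 1 := by nlinarith
  have h3 : (2 * kz : ℤ) = 2 * kx + 1 := by exact_mod_cast h2
  omega

lemma main (hg : Continuous g) (hδ : 0 < δ)
    (H : ∀ y z : Fin p → ℝ, (∀ i, |y i - z i| ≤ δ) → ‖(g y : ℂ) - g z‖ < 1)
    (hper : ∀ (x : Fin p → ℝ) (i : Fin p), g (x + Pi.single i (2 * π)) = g x) :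
    ∃ m : Fin p → ℤ, ∃ Gt : (Fin p → Circle) → ℝ, Continuous Gt ∧
      ∀ x : Fin p → ℝ,
        g x = Circle.exp (Gt (fun i => Circle.exp (x i))) * ∏ i, Circle.exp (x i) ^ m i := by
  have hFc := F_cont hg hδ H
  have hc : ∀ (i : Fin p) (x : Fin p → ℝ), ∃ k : ℤ,
      F g δ (x + Pi.single i (2 * π)) - F g δ x = k * (2 * π) := by
    intro i x
    apply Circle.exp_eq_one.1
    rw [Circle.exp_sub, exp_F hδ, exp_F hδ, hper, div_self']
  have hconst : ∀ (i : Fin p) (x : Fin p → ℝ),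
      F g δ (x + Pi.single i (2 * π)) - F g δ x
        = F g δ ((0 : Fin p → ℝ) + Pi.single i (2 * π)) - F g δ 0 := by
    intro i x
    exact int_const ((hFc.comp (continuous_id.add continuous_const)).sub hFc) (hc i) x 0
  choose m hm using fun i => hc i 0
  set G : (Fin p → ℝ) → ℝ := fun x => F g δ x - ∑ i, (m i : ℝ) * x i with hGdef
  have hGc : Continuous G := by
    apply hFc.sub
    exact continuous_finset_sum _ fun i _ => continuous_const.mul (continuous_apply i)
  have hGper : ∀ (x : Fin p → ℝ) (i : Fin p), G (x + Pi.single i (2 * π)) = G x := by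
    intro x i
    have h1 : F g δ (x + Pi.single i (2 * π)) = F g δ x + (m i : ℝ) * (2 * π) := by
      have h := hconst i x
      rw [hm i] at h
      linarith
    have h2 : ∑ j, (m j : ℝ) * ((x + Pi.single i (2 * π) : Fin p → ℝ) j)
        = (∑ j, (m j : ℝ) * x j) + (m i : ℝ) * (2 * π) := by
      simp only [Pi.add_apply, mul_add, Finset.sum_add_distrib]
      congr 1
      have he : ∀ j, (m j : ℝ) * (Pi.single i (2 * π) : Fin p → ℝ) j
          = if j = i then (m j : ℝ) * (2 * π) else 0 := by
        intro j
        rw [Pi.single_apply]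
        split <;> simp
      rw [Finset.sum_congr rfl fun j _ => he j, Finset.sum_ite_eq' Finset.univ i]
      simp
    simp only [hGdef]
    rw [h1, h2]
    ring
  have hGper1 : ∀ (x : Fin p → ℝ) (i : Fin p) (t : ℤ),
      G (x + Pi.single i ((t : ℝ) * (2 * π))) = G x := by
    intro x i t
    induction t using Int.induction_on with
    | zero => simp
    | succ t ih =>
      have hcast : (((t : ℤ) + 1 : ℤ) : ℝ) * (2 * π) = ((t : ℤ) : ℝ) * (2 * π) + 2 * π := by
        push_cast; ring
      rw [hcast, Pi.single_add, ← add_assoc, hGper, ih]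
    | pred t ih =>
      have key := hGper (x + Pi.single i (((-(t : ℤ) - 1 : ℤ) : ℝ) * (2 * π))) i
      have hcast : ((-(t : ℤ) - 1 : ℤ) : ℝ) * (2 * π) + 2 * π = ((-(t : ℤ) : ℤ) : ℝ) * (2 * π) := by
        push_cast; ring
      rw [add_assoc, ← Pi.single_add, hcast] at key
      rw [← key]
      exact ih
  have hGinv : ∀ x y : Fin p → ℝ, (∀ i, Circle.exp (x i) = Circle.exp (y i)) → G x = G y := by
    intro x y hxy
    choose k hk using fun i => Circle.exp_eq_exp.1 (hxy i)
    have key : ∀ s : Finset (Fin p),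
        G (y + ∑ i ∈ s, Pi.single i ((k i : ℝ) * (2 * π))) = G y := by
      intro s
      induction s using Finset.induction_on with
      | empty => simp
      | @insert a s' ha ih =>
        have hre : y + ∑ i ∈ insert a s', Pi.single i ((k i : ℝ) * (2 * π))
            = (y + ∑ i ∈ s', Pi.single i ((k i : ℝ) * (2 * π)))
              + Pi.single a ((k a : ℝ) * (2 * π)) := by
          rw [Finset.sum_insert ha]; ring
        rw [hre, hGper1, ih]
    have hxe : x = y + ∑ i, Pi.single i ((k i : ℝ) * (2 * π)) := by
      funext j
      rw [Pi.add_apply, Finset.univ_sum_single (fun i => ((k i : ℝ) * (2 * π)))]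
      exact hk j
    rw [hxe]
    exact key Finset.univ
  set Gt : (Fin p → Circle) → ℝ :=
    fun u => G (fun i => Complex.arg ((u i : ℂ))) + Complex.arg ((g 0 : ℂ)) with hGtdef
  have hGtpi : ∀ x : Fin p → ℝ,
      Gt (fun i => Circle.exp (x i)) = G x + Complex.arg ((g 0 : ℂ)) := by
    intro x
    simp only [hGtdef]
    congr 1
    exact hGinv _ _ (fun i => by rw [Circle.exp_arg])
  have hGtc : Continuous Gt := by
    set q : (Fin p → Set.Icc (-π) π) → (Fin p → Circle) :=
      fun d => fun i => Circle.exp ((d i : ℝ)) with hqdef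
    have hqc : Continuous q :=
      continuous_pi fun i =>
        (map_continuous Circle.exp).comp (continuous_subtype_val.comp (continuous_apply i))
    have hsurj : Function.Surjective q := by
      intro u
      refine ⟨fun i => ⟨Complex.arg ((u i : ℂ)), ⟨(Complex.neg_pi_lt_arg _).le,
        Complex.arg_le_pi _⟩⟩, ?_⟩
      funext i
      exact Circle.exp_arg (u i)
    have hq : Topology.IsQuotientMap q := (hqc.isClosedMap).isQuotientMap hqc hsurj
    rw [hq.continuous_iff]
    have : (Gt ∘ q) = fun d => G (fun i => ((d i : ℝ))) + Complex.arg ((g 0 : ℂ)) := by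
      funext d
      exact hGtpi (fun i => ((d i : ℝ)))
    rw [this]
    exact (hGc.comp (continuous_pi fun i =>
      continuous_subtype_val.comp (continuous_apply i))).add continuous_const
  refine ⟨m, Gt, hGtc, fun x => ?_⟩
  rw [hGtpi x, Circle.exp_add, Circle.exp_arg]
  have h1 : Circle.exp (F g δ x) = g x / g 0 := exp_F hδ
  have h2 : F g δ x = G x + ∑ i, (m i : ℝ) * x i := by simp [hGdef]
  have h3 : Circle.exp (∑ i, (m i : ℝ) * x i) = ∏ i, Circle.exp (x i) ^ m i := by
    rw [circle_exp_sum]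
    exact Finset.prod_congr rfl fun i _ => exp_int_mul (m i) (x i)
  rw [h2, Circle.exp_add, h3] at h1
  calc g x = (g x / g 0) * g 0 := (div_mul_cancel _ _).symm
    _ = (Circle.exp (G x) * ∏ i, Circle.exp (x i) ^ m i) * g 0 := by rw [← h1]
    _ = Circle.exp (G x) * g 0 * ∏ i, Circle.exp (x i) ^ m i := by
        rw [mul_right_comm]


/-- the torus covering map -/
noncomputable def torusMap {p : ℕ} (x : Fin p → ℝ) : Fin p → Circle := fun i => Circle.exp (x i)

end Stmt11

/-- Every continuous map `f : (S¹)^p → S¹` is homotopic to a monomial map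
`(u₁, …, u_p) ↦ u₁^{m₁} ⋯ u_p^{m_p}` for some integers `m₁, …, m_p`. -/
theorem statement11 (p : ℕ) (hp : 1 ≤ p) (f : C(Fin p → Circle, Circle)) :
    ∃ m : Fin p → ℤ,
      f.Homotopic
        ⟨fun u : Fin p → Circle => ∏ i : Fin p, u i ^ m i, by
          exact continuous_finset_prod _ fun i _ => (continuous_apply i).zpow (m i)⟩ := by
  classical
  set g : (Fin p → ℝ) → Circle := fun x => f (fun i => Circle.exp (x i)) with hgdef
  have hg : Continuous g :=
    f.continuous.comp (continuous_pi fun i => (map_continuous Circle.exp).comp (continuous_apply i))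
  -- uniform continuity of f
  obtain ⟨δf, hδf, Hf⟩ := Metric.uniformContinuous_iff.mp
    (CompactSpace.uniformContinuous_of_continuous f.continuous) 1 one_pos
  set δ : ℝ := min (δf / 3) 1 with hδdef
  have hδ : 0 < δ := lt_min (by linarith) one_pos
  have hδ1 : δ ≤ 1 := min_le_right _ _
  have hδ3 : δ ≤ δf / 3 := min_le_left _ _
  -- the modulus-of-continuity hypothesis
  have H : ∀ y z : Fin p → ℝ, (∀ i, |y i - z i| ≤ δ) → ‖(g y : ℂ) - g z‖ < 1 := by
    intro y z hyz
    have hlip : ∀ i, dist (Circle.exp (y i)) (Circle.exp (z i)) ≤ 2 * |y i - z i| := by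
      intro i
      have key : (Circle.exp (y i) : ℂ) - Circle.exp (z i)
          = Circle.exp (z i) * (Complex.exp (((y i - z i : ℝ)) * Complex.I) - 1) := by
        simp only [Circle.coe_exp]
        rw [mul_sub, ← Complex.exp_add, mul_one]
        push_cast
        ring_nf
      have habs : ‖((y i - z i : ℝ)) * Complex.I‖ = |y i - z i| := by
        rw [norm_mul, Complex.norm_I, mul_one, Complex.norm_real, Real.norm_eq_abs]
      have h1 : ‖(Complex.exp (((y i - z i : ℝ)) * Complex.I) - 1)‖
          ≤ 2 * |y i - z i| := by
        have := Complex.norm_exp_sub_one_le (x := ((y i - z i : ℝ)) * Complex.I)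
          (by rw [habs]; exact (hyz i).trans hδ1)
        rwa [habs] at this
      show dist ((Circle.exp (y i) : ℂ)) (Circle.exp (z i)) ≤ _
      rw [dist_eq_norm, key]
      rw [norm_mul]
      have : ‖((Circle.exp (z i) : ℂ))‖ = 1 := Circle.norm_coe _
      rw [this, one_mul]
      exact h1
    have hdist : dist (fun i => Circle.exp (y i)) (fun i => Circle.exp (z i)) < δf := by
      rw [dist_pi_lt_iff hδf]
      intro i
      calc dist (Circle.exp (y i)) (Circle.exp (z i)) ≤ 2 * |y i - z i| := hlip i
        _ ≤ 2 * δ := by nlinarith [hyz i]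
        _ < δf := by nlinarith
    have := Hf hdist
    rw [← dist_eq_norm]; exact this
  -- periodicity of g
  have hper : ∀ (x : Fin p → ℝ) (i : Fin p), g (x + Pi.single i (2 * π)) = g x := by
    intro x i
    simp only [hgdef]
    congr 1
    funext j
    by_cases h : j = i
    · subst h
      rw [Pi.add_apply, Pi.single_eq_same, Circle.exp_add_two_pi]
    · rw [Pi.add_apply, Pi.single_eq_of_ne h, add_zero]
  obtain ⟨m, Gt, hGtc, hkey⟩ := Stmt11.main hg hδ H hper
  refine ⟨m, ?_⟩
  -- the identity on the torus
  have hid : ∀ u : Fin p → Circle, f u = Circle.exp (Gt u) * ∏ i, u i ^ m i := by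
    intro u
    have hu : ∀ i, Circle.exp (Complex.arg ((u i : ℂ))) = u i := fun i => Circle.exp_arg (u i)
    have := hkey (fun i => Complex.arg ((u i : ℂ)))
    simp only [hgdef] at this
    calc f u = f (fun i => Circle.exp (Complex.arg ((u i : ℂ)))) := by
          congr 1; funext i; rw [hu i]
      _ = Circle.exp (Gt (fun i => Circle.exp (Complex.arg ((u i : ℂ)))))
            * ∏ i, Circle.exp (Complex.arg ((u i : ℂ))) ^ m i := this
      _ = Circle.exp (Gt u) * ∏ i, u i ^ m i := by
          congr 1
          · congr 2; funext i; rw [hu i]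
          · exact Finset.prod_congr rfl fun i _ => by rw [hu i]
  -- construct the homotopy
  refine ⟨⟨⟨fun q => Circle.exp ((1 - (q.1 : ℝ)) * Gt q.2) * ∏ i, q.2 i ^ m i, ?_⟩, ?_, ?_⟩⟩
  · apply Continuous.mul
    · exact (map_continuous Circle.exp).comp
        ((continuous_const.sub (continuous_subtype_val.comp continuous_fst)).mul
          (hGtc.comp continuous_snd))
    · exact continuous_finset_prod _ fun i _ =>
        ((continuous_apply i).comp continuous_snd).zpow (m i)
  · intro u
    simp only [Set.Icc.coe_zero, sub_zero, one_mul]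
    exact (hid u).symm
  · intro u
    simp only [Set.Icc.coe_one, sub_self, zero_mul, Circle.exp_zero, one_mul]
    rfl
end
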